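/- arXiv:1603.08395 — 6 statements merged into one kernel-verified Lean document; each statement's English description precedes it below -/
import Mathlib

section
/- For the equioriented type A_n quiver with indecomposable representations U_{i,j}, the dimension of Ext^1(U_{k,l}, U_{i,j}) equals 1 if k+1 ≤ i ≤ l+1 ≤ j, and 0 otherwise. -/
/-- A representation of the equioriented quiver of type `A` (vertices indexed by `ℕ`;
representations of `A_n` are those supported on vertices `1,…,n`). -/
structure ARep where
  V : ℕ → Type
  [addgrp : ∀ i, AddCommGroup (V i)]
  [mod : ∀ i, Module ℂ (V i)]
  f : ∀ i : ℕ, V i →ₗ[ℂ] V (i + 1)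

attribute [instance] ARep.addgrp ARep.mod

/-- The space of morphisms of quiver representations `M → N`. -/
noncomputable def homSet (M N : ARep) : Submodule ℂ (∀ i, M.V i →ₗ[ℂ] N.V i) where
  carrier := {φ | ∀ i, N.f i ∘ₗ φ i = φ (i + 1) ∘ₗ M.f i}
  add_mem' := by
    intro a b ha hb i
    simp only [Pi.add_apply, LinearMap.comp_add, LinearMap.add_comp, ha i, hb i]
  zero_mem' := by intro i; simp
  smul_mem' := by
    intro c a ha i
    simp only [Pi.smul_apply, LinearMap.comp_smul, LinearMap.smul_comp, ha i]

/-- `dim Hom(M, N)`. -/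
noncomputable def homDim (M N : ARep) : ℕ := Module.finrank ℂ (homSet M N)

/-- The differential whose cokernel computes `Ext¹(M, N)` for representations of the
equioriented type `A` quiver. -/
noncomputable def delta (M N : ARep) :
    (∀ i, M.V i →ₗ[ℂ] N.V i) →ₗ[ℂ] (∀ i, M.V i →ₗ[ℂ] N.V (i + 1)) where
  toFun φ := fun i => N.f i ∘ₗ φ i - φ (i + 1) ∘ₗ M.f i
  map_add' a b := by
    funext i
    simp only [Pi.add_apply, LinearMap.comp_add, LinearMap.add_comp]
    abel
  map_smul' c a := by
    funext i
    simp only [Pi.smul_apply, LinearMap.comp_smul, LinearMap.smul_comp, RingHom.id_apply,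
      smul_sub]

/-- `dim Ext¹(M, N)`, computed via the standard projective resolution of `M`. -/
noncomputable def ext1Dim (M N : ARep) : ℕ :=
  Module.finrank ℂ ((∀ i, M.V i →ₗ[ℂ] N.V (i + 1)) ⧸ LinearMap.range (delta M N))

/-- The vector space at vertex `k` of the indecomposable `U_{i,j}`. -/
noncomputable def UV (i j k : ℕ) : Submodule ℂ ℂ := if i ≤ k ∧ k ≤ j then ⊤ else ⊥

open Classical in
/-- The indecomposable representation `U_{i,j}`: a copy of `ℂ` at each vertex
`i ≤ k ≤ j`, with identity maps between adjacent copies, and `0` elsewhere. -/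
noncomputable def Urep (i j : ℕ) : ARep where
  V := fun k => ↥(UV i j k)
  f := fun k => if h : UV i j k ≤ UV i j (k + 1) then Submodule.inclusion h else 0

/-- Direct sum of two representations. -/
noncomputable def dsum (M N : ARep) : ARep where
  V := fun i => M.V i × N.V i
  f := fun i => (M.f i).prodMap (N.f i)

/-- Direct sum of a finite family of representations. -/
noncomputable def dsumFam {k : ℕ} (F : Fin k → ARep) : ARep where
  V := fun i => ∀ j, (F j).V i
  f := fun i => LinearMap.pi fun j => ((F j).f i).comp (LinearMap.proj j)

/-- Direct sum of the indecomposables `U_{p.1, p.2}` for `p` running over a list. -/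
noncomputable def dsumList : List (ℕ × ℕ) → ARep
  | [] => Urep 1 0
  | p :: L => dsum (Urep p.1 p.2) (dsumList L)

/-- The path algebra `A = ⊕ᵢ Pᵢ = ⊕ᵢ U_{i,n}` as a representation. -/
noncomputable def pathAlg (n : ℕ) : ARep :=
  dsumFam fun j : Fin n => Urep ((j : ℕ) + 1) n

/-- `S = ⊕ᵢ Sᵢ = ⊕ᵢ U_{i,i}`, the direct sum of all simples. -/
noncomputable def socSum (n : ℕ) : ARep :=
  dsumFam fun j : Fin n => Urep ((j : ℕ) + 1) ((j : ℕ) + 1)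

/-- `A* = ⊕ᵢ Iᵢ = ⊕ᵢ U_{1,i}`. -/
noncomputable def injSum (n : ℕ) : ARep :=
  dsumFam fun j : Fin n => Urep 1 ((j : ℕ) + 1)

/-- `A*/S = ⊕ᵢ U_{1,i-1}`. -/
noncomputable def injModSoc (n : ℕ) : ARep :=
  dsumFam fun j : Fin n => Urep 1 (j : ℕ)

/-- `M` is supported on the vertices `1,…,n`. -/
def SupportedOn (n : ℕ) (M : ARep) : Prop :=
  ∀ i, (i = 0 ∨ n < i) → Subsingleton (M.V i)

/-- An embedding (injective morphism) of representations `N ↪ M`. -/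
def RepEmb (N M : ARep) : Prop :=
  ∃ φ ∈ homSet N M, ∀ i, Function.Injective (φ i)

/-- An isomorphism of representations. -/
def RepIso (M N : ARep) : Prop :=
  ∃ φ ∈ homSet M N, ∀ i, Function.Bijective (φ i)

/-- A representation of the equioriented `A_n` quiver is projective iff all its
structure maps `f_i` (`1 ≤ i < n`) are injective. -/
def IsProjRep (n : ℕ) (P : ARep) : Prop :=
  SupportedOn n P ∧ ∀ i, 1 ≤ i → i < n → Function.Injective (P.f i)

/-- `X` has no nonzero projective direct summand. -/
def NoProjSummand (n : ℕ) (X : ARep) : Prop :=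
  ∀ P' X' : ARep, IsProjRep n P' → RepIso X (dsum P' X') → ∀ i, Subsingleton (P'.V i)

section Aux

open Finset

noncomputable def gv (i j a : ℕ) : ↥(UV i j a) :=
  ⟨if i ≤ a ∧ a ≤ j then 1 else 0, by
    unfold UV; split_ifs with h
    · exact Submodule.mem_top
    · exact Submodule.zero_mem ⊥⟩

lemma gv_coe (i j a : ℕ) : ((gv i j a : ↥(UV i j a)) : ℂ) = if i ≤ a ∧ a ≤ j then 1 else 0 := rfl

lemma coe_zero_of {i j a : ℕ} (h : ¬(i ≤ a ∧ a ≤ j)) (x : ↥(UV i j a)) : (x : ℂ) = 0 := by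
  have hx := x.2
  unfold UV at hx
  simp only [if_neg h, Submodule.mem_bot] at hx
  exact hx

lemma gv_eq_zero {i j a : ℕ} (h : ¬(i ≤ a ∧ a ≤ j)) : gv i j a = 0 :=
  Subtype.ext (coe_zero_of h _)

lemma eq_smul_gv {i j a : ℕ} (h : i ≤ a ∧ a ≤ j) (x : ↥(UV i j a)) :
    x = (x : ℂ) • gv i j a := by
  apply Subtype.ext
  have : ((((x : ℂ) • gv i j a) : ↥(UV i j a)) : ℂ)
      = (x : ℂ) * (if i ≤ a ∧ a ≤ j then 1 else 0) := rfl
  rw [this, if_pos h, mul_one]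

lemma apply_coe {k l i j a b : ℕ} (f : ↥(UV k l a) →ₗ[ℂ] ↥(UV i j b)) (x : ↥(UV k l a)) :
    ((f x : ↥(UV i j b)) : ℂ) = (x : ℂ) * ((f (gv k l a) : ↥(UV i j b)) : ℂ) := by
  by_cases h : k ≤ a ∧ a ≤ l
  · conv_lhs => rw [eq_smul_gv h x]
    rw [map_smul]
    rfl
  · have hx : x = 0 := Subtype.ext (coe_zero_of h x)
    rw [coe_zero_of h x, zero_mul, hx, map_zero]
    rfl

lemma f_coe (i j a : ℕ) (x : ↥(UV i j a)) :
    Subtype.val ((Urep i j).f a x)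
      = (if i ≤ a + 1 ∧ a + 1 ≤ j then 1 else 0) * (x : ℂ) := by
  show Subtype.val ((open Classical in if h : UV i j a ≤ UV i j (a + 1) then
      Submodule.inclusion h else (0 : ↥(UV i j a) →ₗ[ℂ] ↥(UV i j (a+1)))) x) = _
  by_cases hle : UV i j a ≤ UV i j (a+1)
  · rw [dif_pos hle]
    split_ifs with h2
    · rw [one_mul]; rfl
    · rw [zero_mul]
      exact coe_zero_of h2 (Submodule.inclusion hle x)
  · rw [dif_neg hle]
    split_ifs with h2
    · exfalso
      apply hle
      unfold UV
      rw [if_pos h2]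
      exact le_top
    · rw [zero_mul]; rfl

noncomputable def lmap (k l i j a b : ℕ) (c : ℂ) : ↥(UV k l a) →ₗ[ℂ] ↥(UV i j b) where
  toFun x := ((x : ℂ) * c) • gv i j b
  map_add' x y := by
    push_cast
    rw [add_mul, add_smul]
  map_smul' r x := by
    simp only [SetLike.val_smul, smul_eq_mul, RingHom.id_apply, smul_smul]
    ring_nf

lemma lmap_coe (k l i j a b : ℕ) (c : ℂ) (x : ↥(UV k l a)) :
    ((lmap k l i j a b c x : ↥(UV i j b)) : ℂ)
      = (x : ℂ) * c * (if i ≤ b ∧ b ≤ j then 1 else 0) := rfl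

noncomputable def lam (n k l i j : ℕ) :
    (∀ a, ↥(UV k l a) →ₗ[ℂ] ↥(UV i j (a + 1))) →ₗ[ℂ] ℂ :=
  ∑ a ∈ Finset.range (n + 1),
    (UV i j (a + 1)).subtype ∘ₗ (LinearMap.applyₗ (gv k l a)) ∘ₗ (LinearMap.proj a)

lemma lam_apply (n k l i j : ℕ) (ψ : ∀ a, ↥(UV k l a) →ₗ[ℂ] ↥(UV i j (a + 1))) :
    lam n k l i j ψ
      = ∑ a ∈ Finset.range (n + 1), ((ψ a (gv k l a) : ↥(UV i j (a+1))) : ℂ) := by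
  simp [lam, LinearMap.sum_apply]

/-- T-sums: tail sums of a sequence. -/
noncomputable def ts (c : ℕ → ℂ) (n a : ℕ) : ℂ :=
  ∑ b ∈ Finset.range (n + 1), if a ≤ b then c b else 0

lemma ts_diff (c : ℕ → ℂ) (n a : ℕ) (ha : a ≤ n) :
    ts c n a - ts c n (a + 1) = c a := by
  unfold ts
  rw [← Finset.sum_sub_distrib]
  have : ∀ b ∈ Finset.range (n + 1),
      ((if a ≤ b then c b else 0) - (if a + 1 ≤ b then c b else 0))
        = if b = a then c b else 0 := by
    intro b _
    split_ifs with h1 h2 h3 <;> first | ring1 | (exfalso; omega)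
  rw [Finset.sum_congr rfl this, Finset.sum_ite_eq' (Finset.range (n+1)) a c,
    if_pos (Finset.mem_range.mpr (by omega))]

lemma ts_zero (c : ℕ → ℂ) (n a : ℕ) (h : ∀ b, a ≤ b → c b = 0) : ts c n a = 0 := by
  unfold ts
  apply Finset.sum_eq_zero
  intro b _
  split_ifs with hb
  · exact h b hb
  · rfl

lemma ts_zero_eq (c : ℕ → ℂ) (n : ℕ) : ts c n 0 = ∑ b ∈ Finset.range (n + 1), c b := by
  unfold ts
  exact Finset.sum_congr rfl fun b _ => if_pos (Nat.zero_le b)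

lemma delta_eq (n i j k l : ℕ) (t : ℕ → ℂ) (ψ : ∀ a, ↥(UV k l a) →ₗ[ℂ] ↥(UV i j (a + 1)))
    (key : ∀ a, k ≤ a → a ≤ l →
      (if i ≤ a + 1 ∧ a + 1 ≤ j then (1:ℂ) else 0) * (t a * (if i ≤ a ∧ a ≤ j then 1 else 0))
        - (if k ≤ a + 1 ∧ a + 1 ≤ l then (1:ℂ) else 0) * t (a + 1)
            * (if i ≤ a + 1 ∧ a + 1 ≤ j then 1 else 0)
        = ((ψ a (gv k l a) : ↥(UV i j (a + 1))) : ℂ)) :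
    delta (Urep k l) (Urep i j) (fun a => lmap k l i j a a (t a)) = ψ := by
  funext a
  apply LinearMap.ext
  intro x
  apply Subtype.ext
  show Subtype.val (((Urep i j).f a) (lmap k l i j a a (t a) x))
      - Subtype.val ((lmap k l i j (a+1) (a+1) (t (a+1))) (((Urep k l).f a) x))
      = Subtype.val (ψ a x)
  rw [f_coe, lmap_coe k l i j a a (t a) x,
    lmap_coe k l i j (a+1) (a+1) (t (a+1)) ((Urep k l).f a x), f_coe k l a x, apply_coe (ψ a) x]
  by_cases hdom : k ≤ a ∧ a ≤ l
  · linear_combination (Subtype.val x : ℂ) * key a hdom.1 hdom.2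
  · rw [coe_zero_of hdom x]
    ring

end Aux

lemma psi_coe_zero {i j k l : ℕ} (ψ : ∀ a, ↥(UV k l a) →ₗ[ℂ] ↥(UV i j (a + 1))) (b : ℕ)
    (hb : ¬(k ≤ b ∧ b ≤ l) ∨ ¬(i ≤ b + 1 ∧ b + 1 ≤ j)) :
    ((ψ b (gv k l b) : ↥(UV i j (b + 1))) : ℂ) = 0 := by
  rcases hb with hb | hb
  · rw [gv_eq_zero hb, map_zero]; rfl
  · exact coe_zero_of hb _

lemma lam_delta (n i j k l : ℕ) (hk : 1 ≤ k) (hki : k + 1 ≤ i) (hlj : l + 1 ≤ j) (hln : l ≤ n)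
    (φ : ∀ a, ↥(UV k l a) →ₗ[ℂ] ↥(UV i j a)) :
    lam n k l i j (delta (Urep k l) (Urep i j) φ) = 0 := by
  rw [lam_apply n k l i j (delta (Urep k l) (Urep i j) φ)]
  set u : ℕ → ℂ := fun b => (Subtype.val (φ b (gv k l b)) : ℂ) with hu
  have hu0 : ∀ b, ¬(k ≤ b ∧ b ≤ l) → u b = 0 := by
    intro b hb
    show Subtype.val (φ b (gv k l b)) = 0
    rw [gv_eq_zero hb, map_zero]; rfl
  have hu1 : ∀ b, ¬(i ≤ b ∧ b ≤ j) → u b = 0 := fun b hb => coe_zero_of hb _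
  have hterm : ∀ a ∈ Finset.range (n + 1),
      Subtype.val ((delta (Urep k l) (Urep i j) φ) a (gv k l a))
        = u a - u (a + 1) := by
    intro a _
    show Subtype.val (((Urep i j).f a) (φ a (gv k l a)))
        - Subtype.val ((φ (a + 1)) (((Urep k l).f a) (gv k l a))) = u a - u (a + 1)
    rw [f_coe, apply_coe (φ (a + 1)) ((Urep k l).f a (gv k l a)), f_coe k l a (gv k l a), gv_coe]
    have e1 : (if i ≤ a + 1 ∧ a + 1 ≤ j then (1:ℂ) else 0) * u a = u a := by
      by_cases h1 : i ≤ a + 1 ∧ a + 1 ≤ j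
      · rw [if_pos h1, one_mul]
      · rw [if_neg h1, zero_mul]
        rcases (by omega : a + 1 < i ∨ j < a + 1) with h | h
        · exact (hu1 a (by omega)).symm
        · rcases (by omega : ¬(i ≤ a ∧ a ≤ j) ∨ ¬(k ≤ a ∧ a ≤ l)) with h' | h'
          · exact (hu1 a h').symm
          · exact (hu0 a h').symm
    have e2 : (if k ≤ a + 1 ∧ a + 1 ≤ l then (1:ℂ) else 0)
        * ((if k ≤ a ∧ a ≤ l then (1:ℂ) else 0) * (1:ℂ)) * u (a + 1) = u (a + 1) := by
      by_cases h2 : k ≤ a + 1 ∧ a + 1 ≤ l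
      · by_cases h3 : k ≤ a ∧ a ≤ l
        · rw [if_pos h2, if_pos h3]; ring
        · rw [if_pos h2, if_neg h3, hu1 (a + 1) (by omega)]; ring
      · rw [if_neg h2, hu0 (a + 1) h2]; ring
    linear_combination e1 - e2
  have hsum := Finset.sum_congr rfl hterm
  rw [Finset.sum_range_sub' u (n + 1), hu0 0 (by omega), hu0 (n + 1) (by omega), sub_zero] at hsum
  exact hsum

lemma exists_preimage_main (n i j k l : ℕ) (hk : 1 ≤ k) (hki : k + 1 ≤ i) (hil : i ≤ l + 1)
    (hlj : l + 1 ≤ j) (hln : l ≤ n)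
    (ψ : ∀ a, ↥(UV k l a) →ₗ[ℂ] ↥(UV i j (a + 1)))
    (hlam0 : ∑ b ∈ Finset.range (n + 1), ((ψ b (gv k l b) : ↥(UV i j (b + 1))) : ℂ) = 0) :
    ∃ φ, delta (Urep k l) (Urep i j) φ = ψ := by
  set c : ℕ → ℂ := fun b => ((ψ b (gv k l b) : ↥(UV i j (b + 1))) : ℂ) with hcdef
  have hc0 : ∀ b, (¬(k ≤ b ∧ b ≤ l) ∨ ¬(i ≤ b + 1 ∧ b + 1 ≤ j)) → c b = 0 :=
    fun b hb => psi_coe_zero ψ b hb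
  refine ⟨fun a => lmap k l i j a a (ts c n a), delta_eq n i j k l (ts c n) ψ ?_⟩
  intro a hka hal
  rcases (by omega : a + 1 < i ∨ a + 1 = i ∨ (i ≤ a ∧ a + 1 ≤ l) ∨ (i ≤ a ∧ a = l))
    with h | h | h | h
  · rw [if_neg (by omega : ¬(i ≤ a + 1 ∧ a + 1 ≤ j))]
    rw [show ((ψ a (gv k l a) : ↥(UV i j (a + 1))) : ℂ) = c a from rfl,
      hc0 a (Or.inr (by omega))]
    ring
  · rw [if_pos (show i ≤ a + 1 ∧ a + 1 ≤ j by omega),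
      if_neg (show ¬(i ≤ a ∧ a ≤ j) by omega)]
    rw [show ((ψ a (gv k l a) : ↥(UV i j (a + 1))) : ℂ) = c a from rfl]
    by_cases hil2 : i ≤ l
    · rw [if_pos (show k ≤ a + 1 ∧ a + 1 ≤ l by omega)]
      have e1 : ts c n a - ts c n (a + 1) = c a := ts_diff c n a (by omega)
      have e2 : ts c n a = ts c n 0 := by
        unfold ts
        refine Finset.sum_congr rfl fun b _ => ?_
        by_cases hb : a ≤ b
        · rw [if_pos hb, if_pos (Nat.zero_le b)]
        · rw [if_pos (Nat.zero_le b), if_neg hb, hc0 b (Or.inr (by omega))]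
      have e3 : ts c n 0 = 0 := by rw [ts_zero_eq]; exact hlam0
      linear_combination e1 - e2 - e3
    · rw [if_neg (show ¬(k ≤ a + 1 ∧ a + 1 ≤ l) by omega)]
      have hsum : ∑ b ∈ Finset.range (n + 1), c b = c a :=
        Finset.sum_eq_single_of_mem a (Finset.mem_range.mpr (by omega))
          (fun b _ hb => hc0 b (by omega))
      linear_combination hsum - hlam0
  · rw [if_pos (show i ≤ a + 1 ∧ a + 1 ≤ j by omega),
      if_pos (show i ≤ a ∧ a ≤ j by omega),
      if_pos (show k ≤ a + 1 ∧ a + 1 ≤ l by omega)]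
    rw [show ((ψ a (gv k l a) : ↥(UV i j (a + 1))) : ℂ) = c a from rfl]
    linear_combination ts_diff c n a (by omega)
  · rw [if_pos (show i ≤ a + 1 ∧ a + 1 ≤ j by omega),
      if_pos (show i ≤ a ∧ a ≤ j by omega),
      if_neg (show ¬(k ≤ a + 1 ∧ a + 1 ≤ l) by omega)]
    rw [show ((ψ a (gv k l a) : ↥(UV i j (a + 1))) : ℂ) = c a from rfl]
    have e1 : ts c n a - ts c n (a + 1) = c a := ts_diff c n a (by omega)
    have e2 : ts c n (a + 1) = 0 := ts_zero c n (a + 1) (fun b hb => hc0 b (Or.inl (by omega)))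
    linear_combination e1 + e2

lemma exists_preimage_nc (n i j k l : ℕ) (hi : 1 ≤ i) (hij : i ≤ j) (hkl : k ≤ l) (hln : l ≤ n)
    (hC : ¬(k + 1 ≤ i ∧ i ≤ l + 1 ∧ l + 1 ≤ j))
    (ψ : ∀ a, ↥(UV k l a) →ₗ[ℂ] ↥(UV i j (a + 1))) :
    ∃ φ, delta (Urep k l) (Urep i j) φ = ψ := by
  set c : ℕ → ℂ := fun b => ((ψ b (gv k l b) : ↥(UV i j (b + 1))) : ℂ) with hcdef
  have hc0 : ∀ b, (¬(k ≤ b ∧ b ≤ l) ∨ ¬(i ≤ b + 1 ∧ b + 1 ≤ j)) → c b = 0 :=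
    fun b hb => psi_coe_zero ψ b hb
  have hca : ∀ a, ((ψ a (gv k l a) : ↥(UV i j (a + 1))) : ℂ) = c a := fun a => rfl
  rcases (by omega : i ≤ k ∨ l + 2 ≤ i ∨ (k + 1 ≤ i ∧ i ≤ l + 1 ∧ j ≤ l)) with hc1 | hc2 | hc3
  · -- i ≤ k : use tail sums
    refine ⟨fun a => lmap k l i j a a (ts c n a), delta_eq n i j k l (ts c n) ψ ?_⟩
    intro a hka hal
    rw [hca]
    by_cases hj2 : a + 1 ≤ j
    · by_cases hl2 : a + 1 ≤ l
      · rw [if_pos (show i ≤ a + 1 ∧ a + 1 ≤ j by omega),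
          if_pos (show i ≤ a ∧ a ≤ j by omega),
          if_pos (show k ≤ a + 1 ∧ a + 1 ≤ l by omega)]
        linear_combination ts_diff c n a (by omega)
      · rw [if_pos (show i ≤ a + 1 ∧ a + 1 ≤ j by omega),
          if_pos (show i ≤ a ∧ a ≤ j by omega),
          if_neg (show ¬(k ≤ a + 1 ∧ a + 1 ≤ l) by omega)]
        have e1 : ts c n a - ts c n (a + 1) = c a := ts_diff c n a (by omega)
        have e2 : ts c n (a + 1) = 0 :=
          ts_zero c n (a + 1) (fun b hb => hc0 b (Or.inl (by omega)))
        linear_combination e1 + e2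
    · rw [if_neg (show ¬(i ≤ a + 1 ∧ a + 1 ≤ j) by omega), hc0 a (Or.inr (by omega))]
      ring
  · -- l + 2 ≤ i : zero works
    refine ⟨fun a => lmap k l i j a a ((fun _ => (0:ℂ)) a),
      delta_eq n i j k l (fun _ => (0:ℂ)) ψ ?_⟩
    intro a hka hal
    rw [hca, hc0 a (Or.inr (by omega))]
    simp
  · -- k < i ≤ l + 1, j ≤ l : use negative prefix sums
    obtain ⟨hki, hil, hjl⟩ := hc3
    set t : ℕ → ℂ := fun a => -∑ b ∈ Finset.range a, c b with htdef
    have ht : ∀ a, t a = -∑ b ∈ Finset.range a, c b := fun a => rfl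
    refine ⟨fun a => lmap k l i j a a (t a), delta_eq n i j k l t ψ ?_⟩
    intro a hka hal
    rw [hca]
    rcases (by omega : a + 1 < i ∨ a + 1 = i ∨ (i ≤ a ∧ a + 1 ≤ j) ∨ (i ≤ a ∧ j ≤ a))
      with h | h | h | h
    · rw [if_neg (show ¬(i ≤ a + 1 ∧ a + 1 ≤ j) by omega), hc0 a (Or.inr (by omega))]
      ring
    · rw [if_pos (show i ≤ a + 1 ∧ a + 1 ≤ j by omega),
        if_neg (show ¬(i ≤ a ∧ a ≤ j) by omega),
        if_pos (show k ≤ a + 1 ∧ a + 1 ≤ l by omega)]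
      have e1 : ∑ b ∈ Finset.range (a + 1), c b = (∑ b ∈ Finset.range a, c b) + c a :=
        Finset.sum_range_succ c a
      have e2 : ∑ b ∈ Finset.range a, c b = 0 :=
        Finset.sum_eq_zero (fun b hb => hc0 b (Or.inr (by
          have := Finset.mem_range.mp hb; omega)))
      rw [ht (a + 1), ht a]
      linear_combination e1 + e2
    · rw [if_pos (show i ≤ a + 1 ∧ a + 1 ≤ j by omega),
        if_pos (show i ≤ a ∧ a ≤ j by omega),
        if_pos (show k ≤ a + 1 ∧ a + 1 ≤ l by omega)]
      rw [ht (a + 1), ht a]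
      linear_combination Finset.sum_range_succ c a
    · rw [if_neg (show ¬(i ≤ a + 1 ∧ a + 1 ≤ j) by omega), hc0 a (Or.inr (by omega))]
      ring

lemma lam_surj (n i j k l : ℕ) (hkl : k ≤ l) (hln : l ≤ n) (hil : i ≤ l + 1)
    (hlj : l + 1 ≤ j) : Function.Surjective (lam n k l i j) := by
  have h1 : lam n k l i j (fun a => lmap k l i j a (a + 1) (if a = l then 1 else 0)) = 1 := by
    rw [lam_apply]
    rw [Finset.sum_eq_single_of_mem l (Finset.mem_range.mpr (by omega))
      (fun b _ hb => by rw [lmap_coe, if_neg hb]; ring)]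
    rw [lmap_coe, gv_coe, if_pos (show k ≤ l ∧ l ≤ l by omega), if_pos rfl,
      if_pos (show i ≤ l + 1 ∧ l + 1 ≤ j by omega)]
    norm_num
  intro z
  refine ⟨z • (fun a => lmap k l i j a (a + 1) (if a = l then 1 else 0)), ?_⟩
  rw [map_smul, h1, smul_eq_mul, mul_one]

set_option maxHeartbeats 1000000 in
/-- For the equioriented type `A_n` quiver, `dim Ext¹(U_{k,l}, U_{i,j}) = 1` if
`k+1 ≤ i ≤ l+1 ≤ j`, and `0` otherwise. -/
theorem stmt1 (n i j k l : ℕ) (hi : 1 ≤ i) (hij : i ≤ j) (hjn : j ≤ n)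
    (hk : 1 ≤ k) (hkl : k ≤ l) (hln : l ≤ n) :
    ext1Dim (Urep k l) (Urep i j) =
      if k + 1 ≤ i ∧ i ≤ l + 1 ∧ l + 1 ≤ j then 1 else 0 := by
  have key : Module.finrank ℂ ((∀ a, ↥(UV k l a) →ₗ[ℂ] ↥(UV i j (a + 1)))
        ⧸ LinearMap.range (delta (Urep k l) (Urep i j)))
      = if k + 1 ≤ i ∧ i ≤ l + 1 ∧ l + 1 ≤ j then 1 else 0 := by
    by_cases hC : k + 1 ≤ i ∧ i ≤ l + 1 ∧ l + 1 ≤ j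
    · rw [if_pos hC]
      obtain ⟨hki, hil, hlj⟩ := hC
      have h2 : LinearMap.ker (lam n k l i j)
          ≤ LinearMap.range (delta (Urep k l) (Urep i j)) := by
        intro ψ hψ
        have hlam0 : ∑ b ∈ Finset.range (n + 1),
            ((ψ b (gv k l b) : ↥(UV i j (b + 1))) : ℂ) = 0 := by
          rw [← lam_apply n k l i j ψ]
          exact LinearMap.mem_ker.mp hψ
        exact exists_preimage_main n i j k l hk hki hil hlj hln ψ hlam0
      have hrange : LinearMap.range (delta (Urep k l) (Urep i j))
          = LinearMap.ker (lam n k l i j) := by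
        apply le_antisymm _ h2
        rintro x ⟨φ, rfl⟩
        exact LinearMap.mem_ker.mpr (lam_delta n i j k l hk hki hlj hln φ)
      rw [hrange]
      exact (LinearMap.quotKerEquivOfSurjective _
        (lam_surj n i j k l hkl hln hil hlj)).finrank_eq.trans (Module.finrank_self ℂ)
    · rw [if_neg hC]
      have htop : LinearMap.range (delta (Urep k l) (Urep i j)) = ⊤ :=
        LinearMap.range_eq_top.mpr
          (fun ψ => exists_preimage_nc n i j k l hi hij hkl hln hC ψ)
      have : Subsingleton ((∀ a, ↥(UV k l a) →ₗ[ℂ] ↥(UV i j (a + 1)))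
          ⧸ LinearMap.range (delta (Urep k l) (Urep i j))) :=
        Submodule.Quotient.subsingleton_iff.mpr htop
      exact Module.finrank_zero_of_subsingleton
  exact key
end

section
/- The number of non-crossing arc diagrams on n points equals the n-th Catalan number C_n = (1/(n+1)) binom(2n, n). -/
namespace NCArc

/-- non-crossing condition on ℕ-indexed arc diagrams -/
def NC (s : Finset (ℕ × ℕ)) : Prop :=
  ∀ p ∈ s, ∀ q ∈ s, p ≠ q → ¬(p.1 ≤ q.1 ∧ q.1 < p.2 ∧ p.2 ≤ q.2)

/-- arcs live in `[a, b)` and go left-to-right -/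
def Sp (a b : ℕ) (s : Finset (ℕ × ℕ)) : Prop :=
  ∀ p ∈ s, a ≤ p.1 ∧ p.1 < p.2 ∧ p.2 < b

open Classical in
noncomputable def diagrams (a b : ℕ) : Finset (Finset (ℕ × ℕ)) :=
  ((Finset.Ico a b ×ˢ Finset.Ico a b).powerset).filter (fun s => Sp a b s ∧ NC s)

lemma mem_diagrams {a b : ℕ} {s : Finset (ℕ × ℕ)} :
    s ∈ diagrams a b ↔ Sp a b s ∧ NC s := by
  classical
  simp only [diagrams, Finset.mem_filter, Finset.mem_powerset, and_iff_right_iff_imp]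
  rintro ⟨hsp, -⟩ p hp
  obtain ⟨h1, h2, h3⟩ := hsp p hp
  simp only [Finset.mem_product, Finset.mem_Ico]
  exact ⟨⟨h1, lt_trans h2 h3⟩, ⟨le_trans h1 (le_of_lt h2), h3⟩⟩

lemma NC_mono {s t : Finset (ℕ × ℕ)} (h : s ⊆ t) (ht : NC t) : NC s :=
  fun p hp q hq hne => ht p (h hp) q (h hq) hne

lemma card_diagrams_shift (a b k : ℕ) :
    (diagrams (a + k) (b + k)).card = (diagrams a b).card := by
  classical
  have hinj : Function.Injective (fun p : ℕ × ℕ => (p.1 + k, p.2 + k)) := by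
    intro p q h
    simp only [Prod.mk.injEq] at h
    exact Prod.ext (by omega) (by omega)
  refine (Finset.card_bij (fun s _ => s.image (fun p => (p.1 + k, p.2 + k))) ?_ ?_ ?_).symm
  · -- maps into
    intro s hs
    rw [mem_diagrams] at hs ⊢
    obtain ⟨hsp, hnc⟩ := hs
    constructor
    · intro p hp
      simp only [Finset.mem_image] at hp
      obtain ⟨q, hq, rfl⟩ := hp
      obtain ⟨h1, h2, h3⟩ := hsp q hq
      exact ⟨by omega, by omega, by omega⟩
    · intro p hp q hq hne
      simp only [Finset.mem_image] at hp hq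
      obtain ⟨p', hp', rfl⟩ := hp
      obtain ⟨q', hq', rfl⟩ := hq
      have h := hnc p' hp' q' hq' (fun h => hne (by rw [h]))
      simp only [not_and] at h ⊢
      intro h1 h2 h3
      exact h (by omega) (by omega) (by omega)
  · -- injective
    intro s hs t ht h
    exact Finset.image_injective hinj h
  · -- surjective
    intro t ht
    rw [mem_diagrams] at ht
    obtain ⟨hsp, hnc⟩ := ht
    refine ⟨t.image (fun p => (p.1 - k, p.2 - k)), ?_, ?_⟩
    · rw [mem_diagrams]
      constructor
      · intro p hp
        simp only [Finset.mem_image] at hp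
        obtain ⟨q, hq, rfl⟩ := hp
        obtain ⟨h1, h2, h3⟩ := hsp q hq
        exact ⟨by omega, by omega, by omega⟩
      · intro p hp q hq hne
        simp only [Finset.mem_image] at hp hq
        obtain ⟨p', hp', rfl⟩ := hp
        obtain ⟨q', hq', rfl⟩ := hq
        obtain ⟨hp1, hp2, hp3⟩ := hsp p' hp'
        obtain ⟨hq1, hq2, hq3⟩ := hsp q' hq'
        have h := hnc p' hp' q' hq' (fun h => hne (by rw [h]))
        simp only [not_and] at h ⊢
        intro h1 h2 h3
        exact h (by omega) (by omega) (by omega)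
    · show Finset.image _ (Finset.image _ t) = t
      rw [Finset.image_image]
      nth_rewrite 2 [show t = Finset.image id t from (Finset.image_id).symm]
      refine Finset.image_congr ?_
      intro p hp
      obtain ⟨h1, h2, h3⟩ := hsp p hp
      simp only [Function.comp, id]
      exact Prod.ext (by omega) (by omega)

/-- the arcs whose left endpoint is `0` -/
noncomputable def lp (s : Finset (ℕ × ℕ)) : Finset (ℕ × ℕ) :=
  s.filter (fun p => p.1 = 0)

noncomputable def jval (s : Finset (ℕ × ℕ)) : ℕ := (lp s).sup Prod.snd

noncomputable def fwd (n : ℕ) (x : Σ _ : ℕ, Finset (ℕ × ℕ) × Finset (ℕ × ℕ)) :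
    Finset (ℕ × ℕ) :=
  if x.1 = n then x.2.1 else insert (0, x.1 + 1) (x.2.1 ∪ x.2.2)

noncomputable def bwd (n : ℕ) (s : Finset (ℕ × ℕ)) :
    Σ _ : ℕ, Finset (ℕ × ℕ) × Finset (ℕ × ℕ) :=
  if lp s = ∅ then ⟨n, (s, ∅)⟩
  else ⟨jval s - 1, (s.filter (fun p => p.2 < jval s), s.filter (fun p => jval s ≤ p.1))⟩

lemma left_unique {b : ℕ} {s : Finset (ℕ × ℕ)} (hs : s ∈ diagrams 0 b)
    {p q : ℕ × ℕ} (hp : p ∈ s) (hq : q ∈ s) (h : p.1 = q.1) : p = q := by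
  rw [mem_diagrams] at hs
  obtain ⟨hsp, hnc⟩ := hs
  by_contra hne
  have h2 : p.2 ≠ q.2 := fun h2 => hne (Prod.ext h h2)
  obtain ⟨_, hp2, _⟩ := hsp p hp
  obtain ⟨_, hq2, _⟩ := hsp q hq
  rcases lt_or_gt_of_ne h2 with hlt | hgt
  · exact hnc p hp q hq hne ⟨le_of_eq h, by omega, by omega⟩
  · exact hnc q hq p hp (Ne.symm hne) ⟨le_of_eq h.symm, by omega, by omega⟩

lemma lp_char {b : ℕ} {s : Finset (ℕ × ℕ)} (hs : s ∈ diagrams 0 b)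
    (h : lp s ≠ ∅) :
    (0, jval s) ∈ s ∧ 0 < jval s ∧ jval s < b := by
  obtain ⟨p, hp⟩ := Finset.nonempty_of_ne_empty h
  have hmem := hp
  rw [lp, Finset.mem_filter] at hmem
  obtain ⟨hps, hp1⟩ := hmem
  have hlp : lp s = {p} := by
    apply Finset.eq_singleton_iff_unique_mem.mpr
    refine ⟨hp, fun q hq => ?_⟩
    rw [lp, Finset.mem_filter] at hq
    exact left_unique hs hq.1 hps (hq.2.trans hp1.symm)
  have hj : jval s = p.2 := by rw [jval, hlp, Finset.sup_singleton]
  have hpe : p = (0, jval s) := by rw [hj]; exact Prod.ext hp1 rfl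
  rw [mem_diagrams] at hs
  obtain ⟨hsp, -⟩ := hs
  obtain ⟨-, h2, h3⟩ := hsp p hps
  exact ⟨hpe ▸ hps, by omega, by omega⟩

lemma split_arc {b : ℕ} {s : Finset (ℕ × ℕ)} (hs : s ∈ diagrams 0 b) {j : ℕ}
    (hj : (0, j) ∈ s) {p : ℕ × ℕ} (hp : p ∈ s) (hne : p ≠ (0, j)) :
    1 ≤ p.1 ∧ (p.2 < j ∨ j ≤ p.1) := by
  have h1 : 1 ≤ p.1 := by
    rcases Nat.eq_zero_or_pos p.1 with h0 | h0
    · exact absurd (left_unique hs hp hj h0) hne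
    · exact h0
  refine ⟨h1, ?_⟩
  by_contra hc
  push_neg at hc
  obtain ⟨hc1, hc2⟩ := hc
  have hnc := (mem_diagrams.mp hs).2
  exact hnc (0, j) hj p hp (fun h => hne (by rw [h])) ⟨Nat.zero_le _, by omega, by omega⟩

lemma card_rec (n : ℕ) :
    (diagrams 0 (n + 1)).card
      = ∑ i ∈ Finset.range (n + 1), (diagrams 0 i).card * (diagrams 0 (n - i)).card := by
  classical
  have hsum : ∑ i ∈ Finset.range (n + 1), (diagrams 0 i).card * (diagrams 0 (n - i)).card
      = ((Finset.range (n + 1)).sigma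
          (fun i => (diagrams 1 (i + 1)) ×ˢ (diagrams (i + 1) (n + 1)))).card := by
    rw [Finset.card_sigma]
    refine Finset.sum_congr rfl fun i hi => ?_
    rw [Finset.mem_range] at hi
    rw [Finset.card_product]
    have h1 : (diagrams 1 (i + 1)).card = (diagrams 0 i).card := by
      have := card_diagrams_shift 0 i 1
      simpa using this
    have h2 : (diagrams (i + 1) (n + 1)).card = (diagrams 0 (n - i)).card := by
      have := card_diagrams_shift 0 (n - i) (i + 1)
      rw [show 0 + (i + 1) = i + 1 from by omega,
        show n - i + (i + 1) = n + 1 from by omega] at this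
      exact this
    rw [h1, h2]
  rw [hsum]
  refine Finset.card_nbij' (bwd n) (fwd n) ?_ ?_ ?_ ?_
  · -- bwd maps diagrams into sigma
    intro s hs
    simp only [Finset.mem_coe] at hs ⊢
    by_cases h0 : lp s = ∅
    · rw [bwd, if_pos h0, Finset.mem_sigma, Finset.mem_product]
      rw [mem_diagrams] at hs
      obtain ⟨hsp, hnc⟩ := hs
      refine ⟨Finset.self_mem_range_succ n, ?_, ?_⟩
      · rw [mem_diagrams]
        refine ⟨fun p hp => ?_, hnc⟩
        obtain ⟨-, h2, h3⟩ := hsp p hp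
        have : p.1 ≠ 0 := by
          intro hp1
          have : p ∈ lp s := by rw [lp, Finset.mem_filter]; exact ⟨hp, hp1⟩
          rw [h0] at this
          exact absurd this (Finset.notMem_empty p)
        exact ⟨by omega, h2, h3⟩
      · rw [mem_diagrams]
        exact ⟨fun p hp => absurd hp (Finset.notMem_empty p),
          fun p hp => absurd hp (Finset.notMem_empty p)⟩
    · obtain ⟨hj0, hjpos, hjlt⟩ := lp_char hs h0
      rw [bwd, if_neg h0, Finset.mem_sigma, Finset.mem_product]
      dsimp only
      set j := jval s with hjdef
      have hnc := (mem_diagrams.mp hs).2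
      have hsp := (mem_diagrams.mp hs).1
      refine ⟨Finset.mem_range.mpr (by omega), ?_, ?_⟩
      · rw [mem_diagrams, show j - 1 + 1 = j from by omega]
        refine ⟨fun p hp => ?_, NC_mono (Finset.filter_subset _ _) hnc⟩
        rw [Finset.mem_filter] at hp
        obtain ⟨hps, hp2⟩ := hp
        have hne : p ≠ (0, j) := by
          intro h; rw [h] at hp2; exact absurd hp2 (lt_irrefl _)
        obtain ⟨h1, -⟩ := split_arc hs hj0 hps hne
        obtain ⟨-, h2, -⟩ := hsp p hps
        exact ⟨h1, h2, hp2⟩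
      · rw [mem_diagrams, show j - 1 + 1 = j from by omega]
        refine ⟨fun p hp => ?_, NC_mono (Finset.filter_subset _ _) hnc⟩
        rw [Finset.mem_filter] at hp
        obtain ⟨hps, hp1⟩ := hp
        obtain ⟨-, h2, h3⟩ := hsp p hps
        exact ⟨hp1, h2, h3⟩
  · -- fwd maps sigma into diagrams
    rintro ⟨i, u, v⟩ hx
    simp only [Finset.mem_coe, Finset.mem_sigma, Finset.mem_product] at hx ⊢
    obtain ⟨hi, hu, hv⟩ := hx
    rw [Finset.mem_range] at hi
    rw [mem_diagrams] at hu hv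
    obtain ⟨huSp, huNC⟩ := hu
    obtain ⟨hvSp, hvNC⟩ := hv
    by_cases hin : i = n
    · simp only [fwd]
      rw [if_pos hin, mem_diagrams]
      subst hin
      refine ⟨fun p hp => ?_, huNC⟩
      obtain ⟨h1, h2, h3⟩ := huSp p hp
      exact ⟨by omega, h2, h3⟩
    · simp only [fwd]
      rw [if_neg hin, mem_diagrams]
      have hilt : i < n := by omega
      constructor
      · intro p hp
        rcases Finset.mem_insert.mp hp with rfl | hp'
        · exact ⟨by omega, by omega, by omega⟩
        · rcases Finset.mem_union.mp hp' with hpu | hpv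
          · obtain ⟨h1, h2, h3⟩ := huSp p hpu
            exact ⟨by omega, h2, by omega⟩
          · obtain ⟨h1, h2, h3⟩ := hvSp p hpv
            exact ⟨by omega, h2, h3⟩
      · intro p hp q hq hne
        rcases Finset.mem_insert.mp hp with rfl | hp' <;>
          rcases Finset.mem_insert.mp hq with hq0 | hq'
        · exact absurd hq0.symm hne
        · rcases Finset.mem_union.mp hq' with hqu | hqv
          · obtain ⟨h1, h2, h3⟩ := huSp q hqu
            rintro ⟨c1, c2, c3⟩
            dsimp only at c1 c2 c3
            omega
          · obtain ⟨h1, h2, h3⟩ := hvSp q hqv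
            rintro ⟨c1, c2, c3⟩
            dsimp only at c1 c2 c3
            omega
        · subst hq0
          rcases Finset.mem_union.mp hp' with hpu | hpv
          · obtain ⟨h1, h2, h3⟩ := huSp p hpu
            rintro ⟨c1, c2, c3⟩
            dsimp only at c1 c2 c3
            omega
          · obtain ⟨h1, h2, h3⟩ := hvSp p hpv
            rintro ⟨c1, c2, c3⟩
            dsimp only at c1 c2 c3
            omega
        · rcases Finset.mem_union.mp hp' with hpu | hpv <;>
            rcases Finset.mem_union.mp hq' with hqu | hqv
          · exact huNC p hpu q hqu hne
          · obtain ⟨h1, h2, h3⟩ := huSp p hpu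
            obtain ⟨g1, g2, g3⟩ := hvSp q hqv
            rintro ⟨c1, c2, c3⟩
            omega
          · obtain ⟨h1, h2, h3⟩ := hvSp p hpv
            obtain ⟨g1, g2, g3⟩ := huSp q hqu
            rintro ⟨c1, c2, c3⟩
            omega
          · exact hvNC p hpv q hqv hne
  · -- fwd (bwd s) = s
    intro s hs
    by_cases h0 : lp s = ∅
    · rw [bwd, if_pos h0, fwd, if_pos rfl]
    · obtain ⟨hj0, hjpos, hjlt⟩ := lp_char hs h0
      set j := jval s with hjdef
      rw [bwd, if_neg h0, fwd]
      have hne : j - 1 ≠ n := by omega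
      rw [if_neg hne]
      simp only [show jval s - 1 + 1 = jval s from Nat.sub_add_cancel hjpos]
      ext p
      simp only [Finset.mem_insert, Finset.mem_union, Finset.mem_filter]
      constructor
      · rintro (rfl | ⟨hps, -⟩ | ⟨hps, -⟩)
        · exact hj0
        · exact hps
        · exact hps
      · intro hps
        by_cases hpj : p = (0, j)
        · exact Or.inl hpj
        · obtain ⟨-, h2⟩ := split_arc hs hj0 hps hpj
          rcases h2 with h2 | h2
          · exact Or.inr (Or.inl ⟨hps, h2⟩)
          · exact Or.inr (Or.inr ⟨hps, h2⟩)
  · -- bwd (fwd x) = x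
    rintro ⟨i, u, v⟩ hx
    simp only [Finset.mem_coe, Finset.mem_sigma, Finset.mem_product] at hx
    obtain ⟨hi, hu, hv⟩ := hx
    rw [Finset.mem_range] at hi
    rw [mem_diagrams] at hu hv
    obtain ⟨huSp, huNC⟩ := hu
    obtain ⟨hvSp, hvNC⟩ := hv
    by_cases hin : i = n
    · subst hin
      simp only [fwd]
      rw [if_pos trivial]
      have hlp : lp u = ∅ := by
        rw [lp, Finset.filter_eq_empty_iff]
        intro p hp
        obtain ⟨h1, -, -⟩ := huSp p hp
        omega
      have hv0 : v = ∅ := by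
        rw [Finset.eq_empty_iff_forall_notMem]
        intro p hp
        obtain ⟨h1, h2, h3⟩ := hvSp p hp
        omega
      rw [bwd, if_pos hlp, hv0]
    · simp only [fwd]
      rw [if_neg hin]
      have hilt : i < n := by omega
      have hnotu : ∀ p ∈ u, p.1 ≠ 0 := by
        intro p hp
        obtain ⟨h1, -, -⟩ := huSp p hp
        omega
      have hnotv : ∀ p ∈ v, ¬ p.1 = 0 := by
        intro p hp
        obtain ⟨h1, -, -⟩ := hvSp p hp
        omega
      have hlp : lp (insert (0, i + 1) (u ∪ v)) = {(0, i + 1)} := by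
        ext p
        rw [lp, Finset.mem_filter, Finset.mem_insert, Finset.mem_union,
          Finset.mem_singleton]
        constructor
        · rintro ⟨rfl | hp | hp, h1⟩
          · rfl
          · exact absurd h1 (hnotu p hp)
          · exact absurd h1 (hnotv p hp)
        · rintro rfl
          exact ⟨Or.inl rfl, rfl⟩
      have hlpne : lp (insert (0, i + 1) (u ∪ v)) ≠ ∅ := by
        rw [hlp]; exact Finset.singleton_ne_empty _
      have hjv : jval (insert (0, i + 1) (u ∪ v)) = i + 1 := by
        rw [jval, hlp, Finset.sup_singleton]
      rw [bwd, if_neg hlpne, hjv]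
      have e1 : (insert (0, i + 1) (u ∪ v)).filter (fun p => p.2 < i + 1) = u := by
        ext p
        rw [Finset.mem_filter, Finset.mem_insert, Finset.mem_union]
        constructor
        · rintro ⟨rfl | hp | hp, h1⟩
          · omega
          · exact hp
          · obtain ⟨g1, g2, -⟩ := hvSp p hp
            omega
        · intro hp
          obtain ⟨-, -, h3⟩ := huSp p hp
          exact ⟨Or.inr (Or.inl hp), h3⟩
      have e2 : (insert (0, i + 1) (u ∪ v)).filter (fun p => i + 1 ≤ p.1) = v := by
        ext p
        rw [Finset.mem_filter, Finset.mem_insert, Finset.mem_union]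
        constructor
        · rintro ⟨rfl | hp | hp, h1⟩
          · omega
          · obtain ⟨-, g2, g3⟩ := huSp p hp
            omega
          · exact hp
        · intro hp
          obtain ⟨h1, -, -⟩ := hvSp p hp
          exact ⟨Or.inr (Or.inr hp), h1⟩
      rw [e1, e2]
      simp

lemma card_diagrams_eq_catalan (n : ℕ) : (diagrams 0 n).card = catalan n := by
  induction n using Nat.strong_induction_on with
  | _ n ih =>
    match n with
    | 0 =>
      have : diagrams 0 0 = {∅} := by
        ext s
        simp only [mem_diagrams, Finset.mem_singleton]
        constructor
        · rintro ⟨hsp, -⟩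
          rw [Finset.eq_empty_iff_forall_notMem]
          intro p hp
          exact absurd (hsp p hp).2.2 (Nat.not_lt_zero _)
        · rintro rfl
          exact ⟨fun p hp => absurd hp (Finset.notMem_empty p), fun p hp => absurd hp (Finset.notMem_empty p)⟩
      rw [this, catalan_zero]; rfl
    | n + 1 =>
      rw [card_rec, catalan_succ]
      rw [← Fin.sum_univ_eq_sum_range (fun i => (diagrams 0 i).card * (diagrams 0 (n - i)).card)]
      refine Finset.sum_congr rfl fun i _ => ?_
      rw [ih i i.2, ih (n - i) (Nat.lt_succ_of_le (Nat.sub_le _ _))]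

end NCArc

open Classical in
/-- The number of non-crossing arc diagrams on `n` points equals the `n`-th Catalan
number `C_n = (1/(n+1)) · binom(2n, n)`. -/
theorem stmt5 (n : ℕ) :
    Fintype.card {A : Finset (Fin n × Fin n) //
        (∀ p ∈ A, p.1 < p.2) ∧
        ∀ p ∈ A, ∀ q ∈ A, p ≠ q → ¬(p.1 ≤ q.1 ∧ q.1 < p.2 ∧ p.2 ≤ q.2)} =
      catalan n ∧
    catalan n = (2 * n).choose n / (n + 1) := by
  constructor
  · rw [← NCArc.card_diagrams_eq_catalan n, ← Fintype.card_coe (NCArc.diagrams 0 n)]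
    refine Fintype.card_congr (Equiv.ofBijective (fun A =>
      (⟨A.1.image (fun p => (p.1.1, p.2.1)), by
        rw [NCArc.mem_diagrams]
        obtain ⟨h1, h2⟩ := A.2
        constructor
        · intro p hp
          simp only [Finset.mem_image] at hp
          obtain ⟨q, hq, rfl⟩ := hp
          exact ⟨Nat.zero_le _, h1 q hq, q.2.isLt⟩
        · intro p hp q hq hne
          simp only [Finset.mem_image] at hp hq
          obtain ⟨p', hp', rfl⟩ := hp
          obtain ⟨q', hq', rfl⟩ := hq
          have hne' : p' ≠ q' := fun h => hne (by rw [h])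
          have hcon := h2 p' hp' q' hq' hne'
          rintro ⟨c1, c2, c3⟩
          dsimp only at c1 c2 c3
          exact hcon ⟨c1, c2, c3⟩⟩ : {s // s ∈ NCArc.diagrams 0 n})) ⟨?_, ?_⟩)
    · -- injective
      intro A B h
      have hinj : Function.Injective (fun p : Fin n × Fin n => ((p.1.1 : ℕ), (p.2.1 : ℕ))) := by
        intro p q hpq
        simp only [Prod.mk.injEq] at hpq
        exact Prod.ext (Fin.ext hpq.1) (Fin.ext hpq.2)
      have := congrArg Subtype.val h
      exact Subtype.ext (Finset.image_injective hinj this)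
    · -- surjective
      rintro ⟨s, hs⟩
      have hs' := hs
      rw [NCArc.mem_diagrams] at hs'
      obtain ⟨hsp, hnc⟩ := hs'
      refine ⟨⟨s.attach.image (fun p =>
        ((⟨p.1.1, by obtain ⟨-, h2, h3⟩ := hsp p.1 p.2; omega⟩ : Fin n),
         (⟨p.1.2, by obtain ⟨-, h2, h3⟩ := hsp p.1 p.2; omega⟩ : Fin n))), ?_, ?_⟩, ?_⟩
      · intro p hp
        simp only [Finset.mem_image, Finset.mem_attach, true_and] at hp
        obtain ⟨q, rfl⟩ := hp
        obtain ⟨-, h2, -⟩ := hsp q.1 q.2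
        exact h2
      · intro p hp q hq hne
        simp only [Finset.mem_image, Finset.mem_attach, true_and] at hp hq
        obtain ⟨p', rfl⟩ := hp
        obtain ⟨q', rfl⟩ := hq
        have hne' : p'.1 ≠ q'.1 := by
          intro h
          apply hne
          simp only [Prod.ext_iff, Fin.ext_iff]
          rw [h]
          exact ⟨rfl, rfl⟩
        have hcon := hnc p'.1 p'.2 q'.1 q'.2 hne'
        rintro ⟨c1, c2, c3⟩
        rw [Fin.le_def] at c1 c3
        rw [Fin.lt_def] at c2
        dsimp only at c1 c2 c3
        exact hcon ⟨c1, c2, c3⟩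
      · apply Subtype.ext
        dsimp only
        rw [Finset.image_image]
        ext p
        simp only [Finset.mem_image, Finset.mem_attach, true_and, Function.comp]
        constructor
        · rintro ⟨q, rfl⟩
          exact q.2
        · intro hp
          exact ⟨⟨p, hp⟩, rfl⟩
  · rw [catalan_eq_centralBinom_div, Nat.centralBinom]
end

section
/- For the Weyl group element w_i = w_n w_{n−1} ··· w_1 of S_{n+1+k} (where w_j = s_{h_j+1} s_{h_j+2} ··· s_{h_j+j} and ℓ_j = h_j + j), the action on {1,...,ℓ_n} satisfies: if ℓ_j = ℓ_{j−1} + 1 then w_i(ℓ_j) = h_j + (n − j + 2); and if ℓ_j = ℓ_{j−1} + 2 then w_i(ℓ_j − 1) = h_j and w_i(ℓ_j) = h_j + n + 1. -/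
/-- `h_s = #{t : i_t < s}` (so `h₁ = 0` since all entries are `≥ 1`). -/
def hFun (L : List ℕ) (s : ℕ) : ℕ := L.countP fun x => decide (x < s)

/-- `ℓ_j = h_j + j` (with `ℓ₀ = 0`). -/
def lFun (L : List ℕ) (j : ℕ) : ℕ := hFun L j + j

/-- `w_j = s_{h+1} s_{h+2} ⋯ s_{h+j}` where `h = h_j` and `s_m = (m, m+1)`. -/
def wk (h j : ℕ) : Equiv.Perm ℕ :=
  ((List.range j).map fun t => Equiv.swap (h + 1 + t) (h + 2 + t)).prod

/-- `w_i = w_n w_{n-1} ⋯ w_1` (applied as a function, `w_1` acts first). -/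
def wBig (L : List ℕ) (n : ℕ) : Equiv.Perm ℕ :=
  ((List.range n).map fun t => wk (hFun L (n - t)) (n - t)).prod

lemma wk_succ (h m : ℕ) : wk h (m+1) = wk h m * Equiv.swap (h+1+m) (h+2+m) := by
  unfold wk
  rw [List.range_succ, List.map_append, List.prod_append]
  simp

lemma wk_apply (h m x : ℕ) :
    wk h m x = if h + 1 ≤ x ∧ x ≤ h + m then x + 1
      else if x = h + m + 1 ∧ 1 ≤ m then h + 1 else x := by
  induction m generalizing x with
  | zero => simp only [wk, List.range_zero, List.map_nil, List.prod_nil, Equiv.Perm.one_apply]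
            split_ifs <;> omega
  | succ m ih =>
    rw [wk_succ, Equiv.Perm.mul_apply, Equiv.swap_apply_def]
    split_ifs with hx1 hx2 <;> rw [ih] <;> split_ifs <;> omega

lemma wBig_succ (L : List ℕ) (m : ℕ) :
    wBig L (m+1) = wk (hFun L (m+1)) (m+1) * wBig L m := by
  unfold wBig
  rw [List.range_succ_eq_map]
  simp [List.map_map, Function.comp_def, Nat.succ_sub_succ]

lemma hFun_mono (L : List ℕ) {s s' : ℕ} (h : s ≤ s') : hFun L s ≤ hFun L s' := by
  apply List.countP_mono_left
  intro x _ hx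
  simp_all
  omega

lemma hFun_step (L : List ℕ) (hs : L.Pairwise (· < ·)) (s : ℕ) :
    hFun L (s+1) ≤ hFun L s + 1 := by
  induction L with
  | nil => simp [hFun]
  | cons a t ih =>
    rw [List.pairwise_cons] at hs
    have ih' := ih hs.2
    simp only [hFun, List.countP_cons] at *
    rcases Nat.lt_trichotomy a s with h | h | h
    · simp [h, Nat.lt_succ_of_lt h, -Nat.lt_add_one_iff, -Order.lt_add_one_iff]; omega
    · subst h
      have : t.countP (fun x => decide (x < a + 1)) = 0 :=
        List.countP_eq_zero.mpr (fun x hx => by have := hs.1 x hx; simp; omega)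
      simp [this, -Nat.lt_add_one_iff, -Order.lt_add_one_iff]
    · have h1 : ¬ (a < s) := by omega
      have h2 : ¬ (a < s + 1) := by omega
      simp [h1, h2, -Nat.lt_add_one_iff, -Order.lt_add_one_iff]; omega

lemma hFun_add_le (L : List ℕ) (hs : L.Pairwise (· < ·)) (j d : ℕ) :
    hFun L (j + d) ≤ hFun L j + d := by
  induction d with
  | zero => simp
  | succ d ih =>
    have := hFun_step L hs (j + d)
    simp only [← Nat.add_assoc]
    omega

lemma wBig_fix (L : List ℕ) (m x : ℕ) (hx : lFun L m + 1 < x) : wBig L m x = x := by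
  induction m with
  | zero => simp [wBig]
  | succ m ih =>
    have hm : lFun L m + 1 < x := by
      have := hFun_mono L (show m ≤ m + 1 by omega); unfold lFun at *; omega
    rw [wBig_succ, Equiv.Perm.mul_apply, ih hm, wk_apply]
    unfold lFun at hx
    split_ifs <;> omega

lemma climb_inc (L : List ℕ) (hs : L.Pairwise (· < ·)) (j c x : ℕ)
    (h1 : 1 ≤ j) (hc2 : 2 ≤ c) (hcj : c ≤ j + 1)
    (base : wBig L j x = hFun L j + c) (d : ℕ) :
    wBig L (j + d) x = hFun L j + c + d := by
  induction d with
  | zero => simpa using base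
  | succ d ih =>
    have hup : hFun L (j + (d+1)) ≤ hFun L j + (d+1) := hFun_add_le L hs j (d+1)
    have hlo : hFun L j ≤ hFun L (j + (d+1)) := hFun_mono L (by omega)
    have : j + (d+1) = (j + d) + 1 := by omega
    rw [this, wBig_succ, Equiv.Perm.mul_apply, ih, wk_apply]
    rw [this] at hup hlo
    split_ifs <;> omega

lemma climb_fix (L : List ℕ) (j v x : ℕ) (h1 : 1 ≤ j)
    (base : wBig L (j-1) x = v) (hv : v ≤ hFun L j) (d : ℕ) :
    wBig L (j - 1 + d) x = v := by
  induction d with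
  | zero => simpa using base
  | succ d ih =>
    have hlo : hFun L j ≤ hFun L (j - 1 + d + 1) := hFun_mono L (by omega)
    have : j - 1 + (d+1) = (j - 1 + d) + 1 := by omega
    rw [this, wBig_succ, Equiv.Perm.mul_apply, ih, wk_apply]
    split_ifs <;> omega

/-- The action of `w_i` on `{1,…,ℓ_n}`: if `ℓ_j = ℓ_{j−1} + 1` then
`w_i(ℓ_j) = h_j + (n − j + 2)`; if `ℓ_j = ℓ_{j−1} + 2` then `w_i(ℓ_j − 1) = h_j` and
`w_i(ℓ_j) = h_j + n + 1`. -/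
theorem stmt14 (n : ℕ) (L : List ℕ) (hs : L.Pairwise (· < ·))
    (hr : ∀ x ∈ L, 1 ≤ x ∧ x ≤ n - 1)
    (j : ℕ) (h1 : 1 ≤ j) (hj : j ≤ n) :
    (lFun L j = lFun L (j - 1) + 1 →
      wBig L n (lFun L j) = hFun L j + (n - j + 2)) ∧
    (lFun L j = lFun L (j - 1) + 2 →
      wBig L n (lFun L j - 1) = hFun L j ∧
      wBig L n (lFun L j) = hFun L j + n + 1) := by
  have h1L : hFun L 1 = 0 :=
    List.countP_eq_zero.mpr (fun x hx => by have := (hr x hx).1; simp; omega)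
  have h0L : hFun L 0 = 0 :=
    List.countP_eq_zero.mpr (fun x hx => by simp)
  constructor
  · intro hcase
    have hjj : hFun L j = hFun L (j-1) := by unfold lFun at hcase; omega
    have pre : wBig L (j-1) (lFun L j) = hFun L j + 1 := by
      rcases Nat.lt_or_ge j 2 with hj2 | hj2
      · interval_cases j
        simp [wBig, lFun, h1L]
      · have e2 : j - 2 + 1 = j - 1 := by omega
        have fix : wBig L (j-2) (lFun L j) = lFun L j := by
          apply wBig_fix
          have := hFun_mono L (show j-2 ≤ j-1 by omega)
          unfold lFun at *; omega
        rw [show j - 1 = (j-2) + 1 by omega, wBig_succ, Equiv.Perm.mul_apply, e2, fix, wk_apply]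
        unfold lFun at hcase ⊢
        split_ifs <;> omega
    have base : wBig L j (lFun L j) = hFun L j + 2 := by
      have e : j - 1 + 1 = j := by omega
      rw [show j = (j-1) + 1 by omega, wBig_succ, Equiv.Perm.mul_apply, e, pre, wk_apply]
      split_ifs <;> omega
    have final := climb_inc L hs j 2 (lFun L j) h1 (le_refl _) (by omega) base (n - j)
    rw [show j + (n-j) = n by omega] at final
    rw [final]; omega
  · intro hcase
    have hjj : hFun L j = hFun L (j-1) + 1 := by unfold lFun at hcase; omega
    have hj2 : 2 ≤ j := by
      by_contra h
      have : j = 1 := by omega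
      subst this
      simp [lFun, h1L, h0L] at hcase
    constructor
    · have e2 : j - 2 + 1 = j - 1 := by omega
      have fix : wBig L (j-2) (lFun L j - 1) = lFun L j - 1 := by
        apply wBig_fix
        have := hFun_mono L (show j-2 ≤ j-1 by omega)
        unfold lFun at *; omega
      have pre : wBig L (j-1) (lFun L j - 1) = hFun L j := by
        rw [show j - 1 = (j-2) + 1 by omega, wBig_succ, Equiv.Perm.mul_apply, e2, fix, wk_apply]
        unfold lFun at hcase ⊢
        split_ifs <;> omega
      have final := climb_fix L j (hFun L j) (lFun L j - 1) (by omega) pre (le_refl _) (n - j + 1)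
      rw [show j - 1 + (n - j + 1) = n by omega] at final
      exact final
    · have fix : wBig L (j-1) (lFun L j) = lFun L j := by
        apply wBig_fix; omega
      have base : wBig L j (lFun L j) = hFun L j + (j + 1) := by
        have e : j - 1 + 1 = j := by omega
        rw [show j = (j-1) + 1 by omega, wBig_succ, Equiv.Perm.mul_apply, e, fix, wk_apply]
        unfold lFun
        split_ifs <;> omega
      have final := climb_inc L hs j (j+1) (lFun L j) h1 (by omega) (le_refl _) base (n-j)
      rw [show j + (n-j) = n by omega] at final
      rw [final]; omega
end

section
/- The map A ↦ op(A*) on non-crossing arc diagrams on n points is an involution, where A* is the dual arc diagram and op is induced by the symmetry i ↦ n+1−i. -/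
/-- An arc diagram on `n` points: a set of pairs `(i,j)` with `1 ≤ i < j ≤ n`. -/
def IsArcDiagram (n : ℕ) (A : Set (ℕ × ℕ)) : Prop :=
  ∀ p ∈ A, 1 ≤ p.1 ∧ p.1 < p.2 ∧ p.2 ≤ n

/-- Non-crossing: no two distinct arcs `(i,j)`, `(k,l)` satisfy `i ≤ k < j ≤ l`. -/
def NonCrossing (A : Set (ℕ × ℕ)) : Prop :=
  ∀ p ∈ A, ∀ q ∈ A, p ≠ q → ¬(p.1 ≤ q.1 ∧ q.1 < p.2 ∧ p.2 ≤ q.2)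

/-- `(i,j)` is a chain of `A`: a (possibly empty) sequence of consecutive arcs from `i`
to `j`. -/
def ArcChain (A : Set (ℕ × ℕ)) (i j : ℕ) : Prop :=
  Relation.ReflTransGen (fun a b => (a, b) ∈ A) i j

/-- A complete chain: a chain such that no arc of `A` ends at `i` and no arc of `A`
starts at `j`. -/
def IsCompleteChain (A : Set (ℕ × ℕ)) (i j : ℕ) : Prop :=
  ArcChain A i j ∧ (∀ a, (a, i) ∉ A) ∧ ∀ b, (j, b) ∉ A

/-- The dual arc diagram `A* = {(i−1, j) : i ≥ 2, (i,j) a complete chain of A}`. -/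
def dualArc (n : ℕ) (A : Set (ℕ × ℕ)) : Set (ℕ × ℕ) :=
  {p | ∃ i j, 2 ≤ i ∧ i ≤ j ∧ j ≤ n ∧ IsCompleteChain A i j ∧ p = (i - 1, j)}

/-- The symmetry `op` induced by `i ↦ n + 1 − i`. -/
def opArc (n : ℕ) (A : Set (ℕ × ℕ)) : Set (ℕ × ℕ) :=
  (fun p : ℕ × ℕ => (n + 1 - p.2, n + 1 - p.1)) '' A

/-! ### Auxiliary lemmas -/

section Aux

variable {n : ℕ} {A : Set (ℕ × ℕ)}

/-- Down-step relation on the `A` side corresponding to arcs of `op (dual A)`. -/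
def Rrel (n : ℕ) (A : Set (ℕ × ℕ)) (x y : ℕ) : Prop :=
  1 ≤ y ∧ y + 1 ≤ x ∧ x ≤ n ∧ IsCompleteChain A (y + 1) x

lemma arc_bounds (hA : IsArcDiagram n A) {a b : ℕ} (h : (a, b) ∈ A) :
    1 ≤ a ∧ a < b ∧ b ≤ n := hA (a, b) h

lemma inj_right (hnc : NonCrossing A) (hA : IsArcDiagram n A) {a b c : ℕ}
    (h1 : (a, c) ∈ A) (h2 : (b, c) ∈ A) : a = b := by
  by_contra hne
  rcases Nat.lt_or_ge a b with h | h
  · exact hnc (a, c) h1 (b, c) h2 (by simp; omega)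
      ⟨h.le, (arc_bounds hA h2).2.1, le_rfl⟩
  · have h' : b < a := by omega
    exact hnc (b, c) h2 (a, c) h1 (by simp; omega)
      ⟨h'.le, (arc_bounds hA h1).2.1, le_rfl⟩

lemma inj_left (hnc : NonCrossing A) (hA : IsArcDiagram n A) {a b c : ℕ}
    (h1 : (a, b) ∈ A) (h2 : (a, c) ∈ A) : b = c := by
  by_contra hne
  rcases Nat.lt_or_ge b c with h | h
  · exact hnc (a, b) h1 (a, c) h2 (by simp; omega)
      ⟨le_rfl, (arc_bounds hA h1).2.1, h.le⟩
  · have h' : c < b := by omega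
    exact hnc (a, c) h2 (a, b) h1 (by simp; omega)
      ⟨le_rfl, (arc_bounds hA h2).2.1, h'.le⟩

lemma chain_le (hA : IsArcDiagram n A) {u v : ℕ} (h : ArcChain A u v) : u ≤ v := by
  induction h with
  | refl => exact le_rfl
  | tail _ hstep ih => exact ih.trans (arc_bounds hA hstep).2.1.le

/-- An arc cannot exit a chain: start weakly inside, end strictly beyond the chain's
end. -/
lemma L_exit (hA : IsArcDiagram n A) (hnc : NonCrossing A) {u v a b : ℕ}
    (h : ArcChain A u v) (harc : (a, b) ∈ A) (h1 : u ≤ a) (h2 : a < v) (h3 : v < b) :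
    False := by
  revert h1
  induction h using Relation.ReflTransGen.head_induction_on with
  | refl => omega
  | @head u p hstep htail ih =>
    intro h1
    rcases Nat.lt_or_ge a p with h' | h'
    · have hpv : p ≤ v := chain_le hA htail
      exact hnc (u, p) hstep (a, b) harc (by simp; omega) ⟨h1, h', by omega⟩
    · exact ih h'

/-- An arc cannot enter a chain: start strictly before the chain's start, end weakly
inside (past the start). -/
lemma L_enter (hA : IsArcDiagram n A) (hnc : NonCrossing A) {u v a b : ℕ}
    (h : ArcChain A u v) (harc : (a, b) ∈ A) (h1 : a < u) (h2 : u < b) (h3 : b ≤ v) :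
    False := by
  revert h1 h2
  induction h using Relation.ReflTransGen.head_induction_on with
  | refl => omega
  | @head u p hstep htail ih =>
    intro h1 h2
    rcases Nat.lt_or_ge p b with h' | h'
    · have hup : u < p := (arc_bounds hA hstep).2.1
      exact ih (by omega) h'
    · exact hnc (a, b) harc (u, p) hstep (by simp; omega) ⟨by omega, h2, h'⟩

/-- A chain cannot jump over `i` while staying below `j`, when `(i,j) ∈ A`. -/
lemma chain_jump (hA : IsArcDiagram n A) (hnc : NonCrossing A) {i j u v : ℕ}
    (hij : (i, j) ∈ A) (h : ArcChain A u v) (h1 : u ≤ i) (h2 : i < v) (h3 : v < j) :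
    False := by
  revert h1
  induction h using Relation.ReflTransGen.head_induction_on with
  | refl => omega
  | @head u p hstep htail ih =>
    intro h1
    have hpv : p ≤ v := chain_le hA htail
    rcases Nat.lt_or_ge i p with h' | h'
    · rcases Nat.lt_or_ge u i with h'' | h''
      · exact hnc (u, p) hstep (i, j) hij (by simp; omega) ⟨by omega, h', by omega⟩
      · have : u = i := by omega
        subst this
        have := inj_left hnc hA hstep hij
        omega
    · exact ih h'

lemma backMax (hA : IsArcDiagram n A) {x : ℕ} (hx : 1 ≤ x) :
    ∃ m, ArcChain A m x ∧ (∀ a, (a, m) ∉ A) ∧ 1 ≤ m ∧ m ≤ x := by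
  induction x using Nat.strong_induction_on with
  | _ x ih =>
    by_cases h : ∃ a, (a, x) ∈ A
    · obtain ⟨a, ha⟩ := h
      have hb := arc_bounds hA ha
      obtain ⟨m, hc, hm, h1, h2⟩ := ih a hb.2.1 hb.1
      exact ⟨m, hc.tail ha, hm, h1, by omega⟩
    · exact ⟨x, Relation.ReflTransGen.refl, fun a ha => h ⟨a, ha⟩, hx, le_rfl⟩

lemma fwdMaxAux (hA : IsArcDiagram n A) :
    ∀ k x, n - x ≤ k → x ≤ n →
      ∃ M, ArcChain A x M ∧ (∀ b, (M, b) ∉ A) ∧ x ≤ M ∧ M ≤ n := by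
  intro k
  induction k with
  | zero =>
    intro x hk hx
    refine ⟨x, Relation.ReflTransGen.refl, fun b hb => ?_, le_rfl, hx⟩
    have := arc_bounds hA hb
    omega
  | succ k ih =>
    intro x hk hx
    by_cases h : ∃ b, (x, b) ∈ A
    · obtain ⟨b, hb⟩ := h
      have hbb := arc_bounds hA hb
      obtain ⟨M, hc, hM, h1, h2⟩ := ih b (by omega) hbb.2.2
      exact ⟨M, hc.head hb, hM, by omega, h2⟩
    · exact ⟨x, Relation.ReflTransGen.refl, fun b hb => h ⟨b, hb⟩, le_rfl, hx⟩

lemma fwdMax (hA : IsArcDiagram n A) {x : ℕ} (hx : x ≤ n) :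
    ∃ M, ArcChain A x M ∧ (∀ b, (M, b) ∉ A) ∧ x ≤ M ∧ M ≤ n :=
  fwdMaxAux hA (n - x) x le_rfl hx

lemma rtg_ge {i u : ℕ} (h : Relation.ReflTransGen (Rrel n A) u i) : i ≤ u := by
  induction h using Relation.ReflTransGen.head_induction_on with
  | refl => exact le_rfl
  | head h' _ ih => have := h'.2.1; omega

lemma stack1 (hA : IsArcDiagram n A) (hnc : NonCrossing A) {i x : ℕ}
    (h : Relation.ReflTransGen (Rrel n A) x i) :
    ∀ a z, i < a → a ≤ x → (a, z) ∈ A → z ≤ x := by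
  induction h using Relation.ReflTransGen.head_induction_on with
  | refl => intro a z h1 h2 _; omega
  | @head x y hstep htail ih =>
    intro a z h1 h2 harc
    obtain ⟨hy1, hy2, hy3, hcc⟩ := hstep
    rcases Nat.lt_or_ge y a with h' | h'
    · -- a ∈ [y+1, x]
      rcases Nat.lt_or_ge a x with h'' | h''
      · by_contra hzx
        exact L_exit hA hnc hcc.1 harc (by omega) h'' (by omega)
      · have : a = x := by omega
        subst this
        exact absurd harc (hcc.2.2 z)
    · have := ih a z h1 h' harc
      omega

lemma stack2 (hA : IsArcDiagram n A) (hnc : NonCrossing A) {i x : ℕ}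
    (h : Relation.ReflTransGen (Rrel n A) x i) :
    ∀ c z, i < z → z ≤ x → (c, z) ∈ A → i < c := by
  induction h using Relation.ReflTransGen.head_induction_on with
  | refl => intro c z h1 h2 _; omega
  | @head x y hstep htail ih =>
    intro c z h1 h2 harc
    obtain ⟨hy1, hy2, hy3, hcc⟩ := hstep
    have hyi : i ≤ y := rtg_ge htail
    rcases Nat.lt_or_ge y z with h' | h'
    · -- z ∈ [y+1, x]
      rcases Nat.lt_or_ge (y + 1) z with h'' | h''
      · -- z ∈ (y+1, x]: arc must start ≥ y+1
        by_contra hc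
        exact L_enter hA hnc hcc.1 harc (by omega) h'' h2
      · have : z = y + 1 := by omega
        subst this
        exact absurd harc (hcc.2.1 c)
    · exact ih c z h1 h' harc

lemma desc (hA : IsArcDiagram n A) (hnc : NonCrossing A) {i j : ℕ}
    (hij : (i, j) ∈ A) :
    ∀ x, i ≤ x → x < j → (∀ a z, (a, z) ∈ A → x < z → z < j → x < a) →
      Relation.ReflTransGen (Rrel n A) x i := by
  have hb := arc_bounds hA hij
  intro x
  induction x using Nat.strong_induction_on with
  | _ x ihx =>
    intro hix hxj hinv
    rcases eq_or_lt_of_le hix with h | hlt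
    · exact h ▸ Relation.ReflTransGen.refl
    -- i < x < j : no arc starts at x
    have hnostart : ∀ z, (x, z) ∉ A := by
      intro z hz
      have hzb := arc_bounds hA hz
      rcases Nat.lt_trichotomy z j with h' | h' | h'
      · exact absurd (hinv x z hz hzb.2.1 h') (by omega)
      · subst h'
        have := inj_right hnc hA hz hij
        omega
      · exact hnc (i, j) hij (x, z) hz (by simp; omega) ⟨by omega, hxj, by omega⟩
    obtain ⟨m, hmc, hmend, hm1, hmx⟩ := backMax hA (show 1 ≤ x by omega)
    -- m > i
    have hmi : i < m := by
      by_contra h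
      exact chain_jump hA hnc hij hmc (by omega) hlt hxj
    have hcc : IsCompleteChain A m x := ⟨hmc, hmend, hnostart⟩
    have hR : Rrel n A x (m - 1) := by
      refine ⟨by omega, by omega, by omega, ?_⟩
      have : m - 1 + 1 = m := by omega
      rw [this]; exact hcc
    rcases eq_or_lt_of_le (show i ≤ m - 1 by omega) with h | h
    · exact Relation.ReflTransGen.single (h ▸ hR)
    · -- i < m - 1 : establish invariant at m - 1 and recurse
      have hinv' : ∀ a z, (a, z) ∈ A → m - 1 < z → z < j → m - 1 < a := by
        intro a z hz h1 h2
        rcases Nat.lt_or_ge x z with h' | h'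
        · have := hinv a z hz h' h2; omega
        · rcases Nat.lt_or_ge m z with h'' | h''
          · -- z ∈ (m, x]
            by_contra hc
            exact L_enter hA hnc hmc hz (by omega) h'' h'
          · have : z = m := by omega
            subst this
            exact absurd hz (hmend a)
      have htail := ihx (m - 1) (by omega) (by omega) (by omega) hinv'
      exact htail.head hR

/-- Core characterization: membership in `A` in terms of complete chains of `A`. -/
lemma core (hA : IsArcDiagram n A) (hnc : NonCrossing A) (i j : ℕ) :
    (i, j) ∈ A ↔
      1 ≤ i ∧ i < j ∧ j ≤ n ∧
      (¬∃ M, 2 ≤ j ∧ j ≤ M ∧ M ≤ n ∧ IsCompleteChain A j M) ∧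
      (¬∃ m, 2 ≤ m ∧ m ≤ i ∧ i ≤ n ∧ IsCompleteChain A m i) ∧
      Relation.ReflTransGen (Rrel n A) (j - 1) i := by
  constructor
  · intro hij
    have hb := arc_bounds hA hij
    refine ⟨hb.1, hb.2.1, hb.2.2, ?_, ?_, ?_⟩
    · rintro ⟨M, _, _, _, hcc⟩
      exact hcc.2.1 i hij
    · rintro ⟨m, _, _, _, hcc⟩
      exact hcc.2.2 j hij
    · have := desc hA hnc hij (j - 1) (by omega) (by omega)
        (fun a z _ h1 h2 => by omega)
      exact this
  · rintro ⟨h1, h2, h3, hC1, hC2, hC3⟩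
    -- some arc ends at j
    have hend : ∃ a, (a, j) ∈ A := by
      by_contra h
      push_neg at h
      obtain ⟨M, hc, hM, hjM, hMn⟩ := fwdMax hA (show j ≤ n from h3)
      exact hC1 ⟨M, by omega, hjM, hMn, hc, h, hM⟩
    obtain ⟨a, ha⟩ := hend
    have hab := arc_bounds hA ha
    -- a cannot exceed i
    have hai : a ≤ i := by
      by_contra h
      push_neg at h
      have := stack1 hA hnc hC3 a j h (by omega) ha
      omega
    rcases eq_or_lt_of_le hai with h | hlt
    · exact h ▸ ha
    -- a < i : derive contradiction using C2
    exfalso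
    by_cases hstart : ∃ z, (i, z) ∈ A
    · obtain ⟨z, hz⟩ := hstart
      have hzb := arc_bounds hA hz
      rcases Nat.lt_trichotomy z j with h' | h' | h'
      · have := stack2 hA hnc hC3 i z hzb.2.1 (by omega) hz
        omega
      · subst h'
        have := inj_right hnc hA ha hz
        omega
      · exact hnc (a, j) ha (i, z) hz (by simp; omega) ⟨by omega, by omega, by omega⟩
    · push_neg at hstart
      obtain ⟨m, hmc, hmend, hm1, hmi⟩ := backMax hA (show 1 ≤ i from h1)
      have hm : m = 1 := by
        by_contra h
        exact hC2 ⟨m, by omega, hmi, by omega, hmc, hmend, hstart⟩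
      subst hm
      rcases eq_or_lt_of_le hmi with h | h
      · omega
      · exact L_exit hA hnc hmc ha (by omega) hlt h2

/-! ### Translation between `op (dual ·)` of `A` and the relation `Rrel`. -/

lemma memB (c d : ℕ) :
    (c, d) ∈ opArc n (dualArc n A) ↔
      ∃ m M, 2 ≤ m ∧ m ≤ M ∧ M ≤ n ∧ IsCompleteChain A m M ∧
        c = n + 1 - M ∧ d = n + 2 - m := by
  simp only [opArc, dualArc, Set.mem_image, Set.mem_setOf_eq]
  constructor
  · rintro ⟨⟨p, q⟩, ⟨m, M, hm, hmM, hMn, hcc, hpq⟩, heq⟩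
    simp only [Prod.mk.injEq] at hpq heq
    refine ⟨m, M, hm, hmM, hMn, hcc, ?_, ?_⟩ <;> omega
  · rintro ⟨m, M, hm, hmM, hMn, hcc, hc, hd⟩
    exact ⟨(m - 1, M), ⟨m, M, hm, hmM, hMn, hcc, rfl⟩, by simp; omega⟩

lemma mem_opdual (B : Set (ℕ × ℕ)) (i j : ℕ) :
    (i, j) ∈ opArc n (dualArc n B) ↔
      1 ≤ i ∧ i < j ∧ j ≤ n ∧ IsCompleteChain B (n + 2 - j) (n + 1 - i) := by
  simp only [opArc, dualArc, Set.mem_image, Set.mem_setOf_eq]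
  constructor
  · rintro ⟨⟨p, q⟩, ⟨m, M, hm, hmM, hMn, hcc, hpq⟩, heq⟩
    simp only [Prod.mk.injEq] at hpq heq
    have hi : i = n + 1 - M := by omega
    have hj : j = n + 2 - m := by omega
    have hm' : n + 2 - j = m := by omega
    have hM' : n + 1 - i = M := by omega
    rw [hm', hM']
    exact ⟨by omega, by omega, by omega, hcc⟩
  · rintro ⟨h1, h2, h3, hcc⟩
    refine ⟨(n + 2 - j - 1, n + 1 - i), ⟨n + 2 - j, n + 1 - i, by omega, by omega,
      by omega, hcc, rfl⟩, by simp; omega⟩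

lemma rtgR_to_B {x y : ℕ} (h : Relation.ReflTransGen (Rrel n A) x y) :
    ArcChain (opArc n (dualArc n A)) (n + 1 - x) (n + 1 - y) := by
  induction h using Relation.ReflTransGen.head_induction_on with
  | refl => exact Relation.ReflTransGen.refl
  | @head x z hstep htail ih =>
    obtain ⟨hz1, hz2, hz3, hcc⟩ := hstep
    have hstep' : (n + 1 - x, n + 1 - z) ∈ opArc n (dualArc n A) := by
      rw [memB]
      exact ⟨z + 1, x, by omega, hz2, hz3, hcc, rfl, by omega⟩
    exact Relation.ReflTransGen.head hstep' ih

lemma chainB_iff (i j : ℕ) (hi : 1 ≤ i) (hin : i ≤ n) (hj : 1 ≤ j) (hjn : j ≤ n) :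
    ArcChain (opArc n (dualArc n A)) (n + 1 - j) (n + 1 - i) ↔
      Relation.ReflTransGen (Rrel n A) j i := by
  constructor
  · intro h
    unfold ArcChain at h
    -- generalize endpoints
    have key : ∀ u v, Relation.ReflTransGen (fun a b => (a, b) ∈ opArc n (dualArc n A)) u v →
        ∀ x y, 1 ≤ x → x ≤ n → 1 ≤ y → y ≤ n → u = n + 1 - x → v = n + 1 - y →
        Relation.ReflTransGen (Rrel n A) x y := by
      intro u v h
      induction h using Relation.ReflTransGen.head_induction_on with
      | refl =>
        intro x y hx hxn hy hyn hu hv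
        have : x = y := by omega
        exact this ▸ Relation.ReflTransGen.refl
      | @head u w hstep htail ih =>
        intro x y hx hxn hy hyn hu hv
        rw [memB] at hstep
        obtain ⟨m, M, hm, hmM, hMn, hcc, hc, hd⟩ := hstep
        have hMx : M = x := by omega
        have hR : Rrel n A x (m - 1) := by
          refine ⟨by omega, by omega, by omega, ?_⟩
          have h1 : m - 1 + 1 = m := by omega
          rw [h1, ← hMx]; exact hcc
        have htl := ih (m - 1) y (by omega) (by omega) hy hyn (by omega) hv
        exact htl.head hR
    exact key _ _ h j i hj hjn hi hin rfl rfl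
  · intro h
    exact rtgR_to_B h

lemma completeB_iff (i j : ℕ) (h1 : 1 ≤ i) (h2 : i < j) (h3 : j ≤ n) :
    IsCompleteChain (opArc n (dualArc n A)) (n + 2 - j) (n + 1 - i) ↔
      (¬∃ M, 2 ≤ j ∧ j ≤ M ∧ M ≤ n ∧ IsCompleteChain A j M) ∧
      (¬∃ m, 2 ≤ m ∧ m ≤ i ∧ i ≤ n ∧ IsCompleteChain A m i) ∧
      Relation.ReflTransGen (Rrel n A) (j - 1) i := by
  have hchain : ArcChain (opArc n (dualArc n A)) (n + 2 - j) (n + 1 - i) ↔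
      Relation.ReflTransGen (Rrel n A) (j - 1) i := by
    have : n + 2 - j = n + 1 - (j - 1) := by omega
    rw [this]
    have e1 : 1 ≤ j - 1 := by omega
    have e2 : j - 1 ≤ n := by omega
    have e4 : i ≤ n := by omega
    exact chainB_iff i (j - 1) h1 e4 e1 e2
  unfold IsCompleteChain
  rw [hchain]
  constructor
  · rintro ⟨hc, hend, hstart⟩
    refine ⟨?_, ?_, hc⟩
    · rintro ⟨M, hj2, hjM, hMn, hcc⟩
      exact hend (n + 1 - M) (by
        rw [memB]
        exact ⟨j, M, hj2, hjM, hMn, hcc, rfl, rfl⟩)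
    · rintro ⟨m, hm2, hmi, hin, hcc⟩
      exact hstart (n + 2 - m) (by
        rw [memB]
        exact ⟨m, i, hm2, hmi, hin, hcc, by omega, rfl⟩)
  · rintro ⟨hC1, hC2, hc⟩
    refine ⟨hc, ?_, ?_⟩
    · intro a ha
      rw [memB] at ha
      obtain ⟨m, M, hm, hmM, hMn, hcc, hc', hd⟩ := ha
      have : m = j := by omega
      subst this
      exact hC1 ⟨M, hm, hmM, hMn, hcc⟩
    · intro b hb
      rw [memB] at hb
      obtain ⟨m, M, hm, hmM, hMn, hcc, hc', hd⟩ := hb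
      have : M = i := by omega
      subst this
      exact hC2 ⟨m, hm, hmM, by omega, hcc⟩

end Aux

/-- The map `A ↦ op(A*)` is an involution on non-crossing arc diagrams on `n` points. -/
theorem stmt15 (n : ℕ) (A : Set (ℕ × ℕ))
    (hA : IsArcDiagram n A) (hnc : NonCrossing A) :
    opArc n (dualArc n (opArc n (dualArc n A))) = A := by
  ext ⟨i, j⟩
  rw [mem_opdual, core hA hnc i j]
  constructor
  · rintro ⟨h1, h2, h3, hcc⟩
    rw [completeB_iff i j h1 h2 h3] at hcc
    exact ⟨h1, h2, h3, hcc.1, hcc.2.1, hcc.2.2⟩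
  · rintro ⟨h1, h2, h3, hC1, hC2, hC3⟩
    exact ⟨h1, h2, h3, (completeB_iff i j h1 h2 h3).mpr ⟨hC1, hC2, hC3⟩⟩
end

section
/- For the equioriented A_n quiver, let M = P ⊕ X with P projective and X without projective direct summands, and let N = N_P ⊕ N̄ with N_P projective and N̄ without projective summands. Then N embeds into M if and only if N̄ embeds into X and dim N − dim N̄ ≤ dim P componentwise. -/
open Function Module LinearMap

section Basics

variable {B C : Type*} [AddCommGroup B] [Module ℂ B] [AddCommGroup C] [Module ℂ C]

lemma lmap_ext_cod [Subsingleton C] (f g : B →ₗ[ℂ] C) : f = g := by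
  ext x; exact Subsingleton.elim _ _

lemma lmap_inj_dom [Subsingleton B] (f : B →ₗ[ℂ] C) : Function.Injective f := by
  intro a b _; exact Subsingleton.elim _ _

lemma lmap_zero_dom [Subsingleton B] (f : B →ₗ[ℂ] C) : f = 0 := by
  ext x; rw [Subsingleton.elim x 0, map_zero]; rfl

lemma lmap_ext_dom [Subsingleton B] (f g : B →ₗ[ℂ] C) : f = g := by
  rw [lmap_zero_dom f, lmap_zero_dom g]

lemma sub_subsingleton {V : Type*} [AddCommGroup V] [Module ℂ V] [Subsingleton V]
    (p : Submodule ℂ V) : Subsingleton ↥p :=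
  ⟨fun a b => Subtype.ext (Subsingleton.elim _ _)⟩

end Basics

/-- The composite structure map `X.V i → X.V j` for `i ≤ j`. -/
noncomputable def cmpA (X : ARep) {i j : ℕ} (h : i ≤ j) : X.V i →ₗ[ℂ] X.V j :=
  Nat.leRecOn h (fun {k} g => X.f k ∘ₗ g) LinearMap.id

lemma cmpA_self (X : ARep) {i : ℕ} (h : i ≤ i) : cmpA X h = LinearMap.id :=
  Nat.leRecOn_self _

lemma cmpA_succ (X : ARep) {i j : ℕ} (h : i ≤ j) (h2 : i ≤ j + 1) :
    cmpA X h2 = X.f j ∘ₗ cmpA X h :=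
  Nat.leRecOn_succ h _

lemma cmpA_succ_left (X : ARep) {i j : ℕ} (h : i + 1 ≤ j) (h2 : i ≤ j) :
    cmpA X h2 = cmpA X h ∘ₗ X.f i := by
  induction j, h using Nat.le_induction with
  | base =>
    rw [cmpA_self, cmpA_succ X (le_refl i) h2, cmpA_self]
    simp
  | succ j h ih =>
    have hij : i ≤ j := Nat.le_of_succ_le h
    rw [cmpA_succ X hij h2, cmpA_succ X h (Nat.le_succ_of_le h), ih hij, LinearMap.comp_assoc]

lemma cmpA_trans (X : ARep) {i j k : ℕ} (h1 : i ≤ j) (h2 : j ≤ k) :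
    cmpA X h2 ∘ₗ cmpA X h1 = cmpA X (h1.trans h2) := by
  induction k, h2 using Nat.le_induction with
  | base => rw [cmpA_self]; simp
  | succ k h2 ih =>
    rw [cmpA_succ X h2, cmpA_succ X (h1.trans h2), LinearMap.comp_assoc, ih]
lemma cmpA_natural {A B : ARep} {φ : ∀ i, A.V i →ₗ[ℂ] B.V i} (hφ : φ ∈ homSet A B)
    {i j : ℕ} (h : i ≤ j) : φ j ∘ₗ cmpA A h = cmpA B h ∘ₗ φ i := by
  induction j, h using Nat.le_induction with
  | base => rw [cmpA_self, cmpA_self]; simp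
  | succ j h ih =>
    rw [cmpA_succ A h (Nat.le_succ_of_le h), cmpA_succ B h (Nat.le_succ_of_le h),
      ← LinearMap.comp_assoc, ← hφ j, LinearMap.comp_assoc, ih, LinearMap.comp_assoc]

lemma cmpA_inj {n : ℕ} {P : ARep} (hP : IsProjRep n P) {i j : ℕ} (h1 : 1 ≤ i)
    (h : i ≤ j) (hn : j ≤ n) : Function.Injective (cmpA P h) := by
  induction j, h using Nat.le_induction with
  | base => rw [cmpA_self]; exact fun a b hab => hab
  | succ j h ih =>
    rw [cmpA_succ P h (Nat.le_succ_of_le h), LinearMap.coe_comp]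
    exact Function.Injective.comp
      (hP.2 j (h1.trans h) (Nat.lt_of_succ_le hn)) (ih (Nat.le_of_succ_le hn))

lemma cmpA_dsum (A B : ARep) {i j : ℕ} (h : i ≤ j) :
    cmpA (dsum A B) h = (cmpA A h).prodMap (cmpA B h) := by
  induction j, h using Nat.le_induction with
  | base => rw [cmpA_self, cmpA_self, cmpA_self]; ext x <;> rfl
  | succ j h ih =>
    rw [cmpA_succ (dsum A B) h (Nat.le_succ_of_le h), cmpA_succ A h (Nat.le_succ_of_le h),
      cmpA_succ B h (Nat.le_succ_of_le h), ih]
    ext x <;> rfl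

lemma homSet_comp {A B C : ARep} {φ : ∀ i, A.V i →ₗ[ℂ] B.V i} {ψ : ∀ i, B.V i →ₗ[ℂ] C.V i}
    (hφ : φ ∈ homSet A B) (hψ : ψ ∈ homSet B C) :
    (fun i => ψ i ∘ₗ φ i) ∈ homSet A C := by
  intro i
  show C.f i ∘ₗ (ψ i ∘ₗ φ i) = (ψ (i+1) ∘ₗ φ (i+1)) ∘ₗ A.f i
  rw [← LinearMap.comp_assoc, hψ i, LinearMap.comp_assoc, hφ i, LinearMap.comp_assoc]

lemma RepIso.symm {A B : ARep} (h : RepIso A B) : RepIso B A := by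
  obtain ⟨φ, hφ, hbij⟩ := h
  classical
  let e : ∀ i, A.V i ≃ₗ[ℂ] B.V i := fun i => LinearEquiv.ofBijective (φ i) (hbij i)
  refine ⟨fun i => (e i).symm.toLinearMap, fun i => ?_, fun i => (e i).symm.bijective⟩
  ext y
  show A.f i ((e i).symm y) = (e (i+1)).symm (B.f i y)
  apply (e (i+1)).injective
  have h1 : ∀ z, e (i+1) (A.f i z) = B.f i (e i z) := by
    intro z
    have := congrArg (fun g => g z) (hφ i)
    exact this.symm
  rw [h1, LinearEquiv.apply_symm_apply, LinearEquiv.apply_symm_apply]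
section Ext

variable {A B C : Type} [AddCommGroup A] [Module ℂ A] [AddCommGroup B] [Module ℂ B]
  [AddCommGroup C] [Module ℂ C]

lemma existsInj [FiniteDimensional ℂ B] [FiniteDimensional ℂ C]
    (h : Module.finrank ℂ B ≤ Module.finrank ℂ C) :
    ∃ Φ : B →ₗ[ℂ] C, Function.Injective Φ := by
  classical
  by_cases hs : Subsingleton B
  · exact ⟨0, lmap_inj_dom 0⟩
  · have : Nontrivial B := not_subsingleton_iff_nontrivial.mp hs
    have hm : 0 < Module.finrank ℂ B := Module.finrank_pos
    set m := Module.finrank ℂ B with hmdef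
    set k := Module.finrank ℂ C with hkdef
    let σ : Fin k → Fin m := fun j => if hj : (j : ℕ) < m then ⟨j, hj⟩ else ⟨0, hm⟩
    have hσ : Function.Surjective σ := by
      intro i
      refine ⟨⟨(i : ℕ), lt_of_lt_of_le i.2 h⟩, ?_⟩
      simp only [σ, dif_pos i.2]
    refine ⟨(Module.finBasis ℂ C).equivFun.symm.toLinearMap ∘ₗ
      LinearMap.funLeft ℂ ℂ σ ∘ₗ (Module.finBasis ℂ B).equivFun.toLinearMap, ?_⟩
    simp only [LinearMap.coe_comp, LinearEquiv.coe_coe]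
    exact ((Module.finBasis ℂ C).equivFun.symm.injective.comp
      (LinearMap.funLeft_injective_of_surjective ℂ ℂ σ hσ)).comp
      (Module.finBasis ℂ B).equivFun.injective

lemma extendInj [FiniteDimensional ℂ A] [FiniteDimensional ℂ B] [FiniteDimensional ℂ C]
    (f : A →ₗ[ℂ] B) (hf : Function.Injective f) (ψ : A →ₗ[ℂ] C)
    (hψ : Function.Injective ψ) (hd : Module.finrank ℂ B ≤ Module.finrank ℂ C) :
    ∃ Φ : B →ₗ[ℂ] C, Function.Injective Φ ∧ Φ ∘ₗ f = ψ := by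
  classical
  obtain ⟨D, hD⟩ := Submodule.exists_isCompl (LinearMap.range f)
  obtain ⟨E, hE⟩ := Submodule.exists_isCompl (LinearMap.range ψ)
  have hfr : Module.finrank ℂ (LinearMap.range f) = Module.finrank ℂ A :=
    LinearMap.finrank_range_of_inj hf
  have hψr : Module.finrank ℂ (LinearMap.range ψ) = Module.finrank ℂ C - Module.finrank ℂ E := by
    have := Submodule.finrank_add_eq_of_isCompl hE
    omega
  have hDE : Module.finrank ℂ D ≤ Module.finrank ℂ E := by
    have h1 := Submodule.finrank_add_eq_of_isCompl hD
    have h2 := Submodule.finrank_add_eq_of_isCompl hE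
    have h3 : Module.finrank ℂ (LinearMap.range ψ) = Module.finrank ℂ A :=
      LinearMap.finrank_range_of_inj hψ
    omega
  obtain ⟨e, he⟩ := existsInj (B := D) (C := E) hDE
  let eA : A ≃ₗ[ℂ] LinearMap.range f := LinearEquiv.ofInjective f hf
  let φ1 : (LinearMap.range f) →ₗ[ℂ] C := ψ ∘ₗ eA.symm.toLinearMap
  let φ2 : D →ₗ[ℂ] C := E.subtype ∘ₗ e
  let pr1 := (LinearMap.range f).linearProjOfIsCompl D hD
  let pr2 := D.linearProjOfIsCompl (LinearMap.range f) hD.symm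
  refine ⟨φ1 ∘ₗ pr1 + φ2 ∘ₗ pr2, ?_, ?_⟩
  · intro u v huv
    have hx : ∀ x : B, φ1 (pr1 x) + φ2 (pr2 x) = 0 → x = 0 := by
      intro x hx0
      have hmem1 : φ1 (pr1 x) ∈ LinearMap.range ψ := ⟨eA.symm (pr1 x), rfl⟩
      have hmem2 : φ2 (pr2 x) ∈ E := (e (pr2 x)).2
      have h10 : φ1 (pr1 x) = 0 := by
        have : φ1 (pr1 x) ∈ (LinearMap.range ψ) ⊓ E := by
          refine ⟨hmem1, ?_⟩
          have : φ1 (pr1 x) = -φ2 (pr2 x) := eq_neg_of_add_eq_zero_left hx0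
          rw [this]; exact neg_mem hmem2
        rwa [hE.inf_eq_bot, Submodule.mem_bot] at this
      have h20 : φ2 (pr2 x) = 0 := by rwa [h10, zero_add] at hx0
      have hp1 : pr1 x = 0 := by
        have : ψ (eA.symm (pr1 x)) = 0 := h10
        have := hψ (by rw [this, map_zero] : ψ (eA.symm (pr1 x)) = ψ 0)
        have := congrArg eA this
        simpa using this
      have hp2 : pr2 x = 0 := by
        have he0 : (e (pr2 x) : C) = 0 := h20
        have : e (pr2 x) = 0 := Subtype.ext he0
        have := he (by rw [this, map_zero] : e (pr2 x) = e 0)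
        exact this
      have : ((pr1 x : B) + (pr2 x : B)) = x := Submodule.projection_add_projection_eq_self hD x
      rw [hp1, hp2] at this
      simpa using this.symm
    have : φ1 (pr1 (u - v)) + φ2 (pr2 (u - v)) = 0 := by
      simp only [map_sub]
      have huv' : φ1 (pr1 u) + φ2 (pr2 u) = φ1 (pr1 v) + φ2 (pr2 v) := huv
      rw [sub_add_sub_comm, huv', sub_self]
    have := hx _ this
    exact sub_eq_zero.mp this
  · ext a
    have h1 : pr1 (f a) = ⟨f a, ⟨a, rfl⟩⟩ :=
      Submodule.linearProjOfIsCompl_apply_left hD ⟨f a, ⟨a, rfl⟩⟩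
    have h2 : pr2 (f a) = 0 :=
      Submodule.linearProjOfIsCompl_apply_right' hD.symm ⟨a, rfl⟩
    simp only [LinearMap.comp_apply, LinearMap.add_apply, h1, h2, map_zero, add_zero]
    show ψ (eA.symm ⟨f a, _⟩) = ψ a
    congr 1
    have : eA a = ⟨f a, ⟨a, rfl⟩⟩ := by
      apply Subtype.ext; simp [eA, LinearEquiv.ofInjective_apply]
    rw [← this, LinearEquiv.symm_apply_apply]

end Ext
lemma projEmbed {n : ℕ} (Q P : ARep) (hQfd : ∀ i, FiniteDimensional ℂ (Q.V i))
    (hPfd : ∀ i, FiniteDimensional ℂ (P.V i)) (hQ : IsProjRep n Q) (hP : IsProjRep n P)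
    (hd : ∀ i, Module.finrank ℂ (Q.V i) ≤ Module.finrank ℂ (P.V i)) : RepEmb Q P := by
  classical
  have step : ∀ i (h : Q.V i →ₗ[ℂ] P.V i), Function.Injective h →
      ∃ h' : Q.V (i+1) →ₗ[ℂ] P.V (i+1), Function.Injective h' ∧ h' ∘ₗ Q.f i = P.f i ∘ₗ h := by
    intro i h hinj
    rcases Nat.lt_or_ge i n with hin | hin
    · rcases Nat.eq_zero_or_pos i with rfl | hpos
      · haveI := hQ.1 0 (Or.inl rfl)
        haveI := hQfd 1; haveI := hPfd 1
        obtain ⟨Φ, hΦ⟩ := existsInj (B := Q.V 1) (C := P.V 1) (hd 1)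
        exact ⟨Φ, hΦ, lmap_ext_dom _ _⟩
      · haveI := hQfd i; haveI := hQfd (i+1); haveI := hPfd (i+1)
        obtain ⟨Φ, hΦ, hc⟩ := extendInj (Q.f i) (hQ.2 i hpos hin) (P.f i ∘ₗ h)
          (by rw [LinearMap.coe_comp]; exact (hP.2 i hpos hin).comp hinj) (hd (i+1))
        exact ⟨Φ, hΦ, hc⟩
    · haveI : Subsingleton (Q.V (i+1)) := hQ.1 (i+1) (Or.inr (Nat.lt_succ_of_le hin))
      haveI : Subsingleton (P.V (i+1)) := hP.1 (i+1) (Or.inr (Nat.lt_succ_of_le hin))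
      exact ⟨0, lmap_inj_dom 0, lmap_ext_cod _ _⟩
  let seq : ∀ i, {h : Q.V i →ₗ[ℂ] P.V i // Function.Injective h} := fun i =>
    Nat.rec ⟨0, by haveI := hQ.1 0 (Or.inl rfl); exact lmap_inj_dom 0⟩
      (fun i prev => ⟨(step i prev.1 prev.2).choose, (step i prev.1 prev.2).choose_spec.1⟩) i
  have hcompat : ∀ i, (seq (i+1)).1 ∘ₗ Q.f i = P.f i ∘ₗ (seq i).1 := fun i =>
    (step i (seq i).1 (seq i).2).choose_spec.2
  exact ⟨fun i => (seq i).1, fun i => (hcompat i).symm, fun i => (seq i).2⟩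
section NoProj

variable (X : ARep) (n b : ℕ) (x : X.V (b + 1)) (lam : Module.Dual ℂ (X.V n))

/-- The orbit of `x` under the structure maps. -/
noncomputable def cvec : ∀ i, X.V i := fun i => if hi : b + 1 ≤ i then cmpA X hi x else 0

lemma cvec_pos {i : ℕ} (hi : b + 1 ≤ i) : cvec X b x i = cmpA X hi x := dif_pos hi

lemma cvec_neg {i : ℕ} (hi : ¬ b + 1 ≤ i) : cvec X b x i = 0 := dif_neg hi

lemma cvec_succ {i : ℕ} (hi : b + 1 ≤ i) : X.f i (cvec X b x i) = cvec X b x (i + 1) := by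
  rw [cvec_pos X b x hi, cvec_pos X b x (Nat.le_succ_of_le hi),
    cmpA_succ X hi (Nat.le_succ_of_le hi)]
  rfl

lemma cvec_cmpA {i : ℕ} (hi : b + 1 ≤ i) (hin : i ≤ n) :
    cmpA X hin (cvec X b x i) = cvec X b x n := by
  rw [cvec_pos X b x hi, cvec_pos X b x (hi.trans hin)]
  have := congrArg (fun g => g x) (cmpA_trans X hi hin)
  simpa using this

/-- The span of the orbit. -/
noncomputable def Ksub (i : ℕ) : Submodule ℂ (X.V i) := Submodule.span ℂ {cvec X b x i}

lemma cvec_mem (i : ℕ) : cvec X b x i ∈ Ksub X b x i := Submodule.mem_span_singleton_self _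

lemma Ksub_map : ∀ i, ∀ y ∈ Ksub X b x i, X.f i y ∈ Ksub X b x (i + 1) := by
  intro i y hy
  obtain ⟨t, ht⟩ := Submodule.mem_span_singleton.mp hy
  rw [← ht, map_smul]
  apply Submodule.smul_mem
  by_cases hi : b + 1 ≤ i
  · rw [cvec_succ X b x hi]; exact cvec_mem X b x (i + 1)
  · rw [cvec_neg X b x hi, map_zero]; exact Submodule.zero_mem _

/-- The candidate projective summand generated by `x`. -/
@[reducible] noncomputable def Krep : ARep where
  V := fun i => ↥(Ksub X b x i)
  f := fun i => (X.f i).restrict (Ksub_map X b x i)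

lemma Ksub_subsingleton_lt {i : ℕ} (hi : ¬ b + 1 ≤ i) : Subsingleton ↥(Ksub X b x i) := by
  have hbot : Ksub X b x i = ⊥ := by
    rw [show Ksub X b x i = Submodule.span ℂ {cvec X b x i} from rfl, cvec_neg X b x hi,
      Submodule.span_zero_singleton]
  constructor
  rintro ⟨yu, hu⟩ ⟨yv, hv⟩
  apply Subtype.ext
  rw [hbot, Submodule.mem_bot] at hu hv
  simp only [hu, hv]

/-- The retraction `X → K`. -/
noncomputable def rmap : ∀ i, X.V i →ₗ[ℂ] ↥(Ksub X b x i) := fun i =>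
  if hcond : b + 1 ≤ i ∧ i ≤ n then
    LinearMap.toSpanSingleton ℂ _ ⟨cvec X b x i, cvec_mem X b x i⟩ ∘ₗ lam ∘ₗ cmpA X hcond.2
  else 0

lemma rmap_pos {i : ℕ} (h1 : b + 1 ≤ i) (h2 : i ≤ n) (y : X.V i) :
    rmap X n b x lam i y = lam (cmpA X h2 y) • ⟨cvec X b x i, cvec_mem X b x i⟩ := by
  have hr : rmap X n b x lam i =
      LinearMap.toSpanSingleton ℂ ↥(Ksub X b x i) ⟨cvec X b x i, cvec_mem X b x i⟩ ∘ₗ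
        (lam : X.V n →ₗ[ℂ] ℂ) ∘ₗ cmpA X h2 := dif_pos ⟨h1, h2⟩
  rw [hr]
  simp [LinearMap.toSpanSingleton_apply]

lemma rmap_neg {i : ℕ} (hi : ¬ (b + 1 ≤ i ∧ i ≤ n)) : rmap X n b x lam i = 0 := dif_neg hi

end NoProj
lemma noProj_cmpA_zero {n : ℕ} (X : ARep) (hsupp : SupportedOn n X)
    (hnps : NoProjSummand n X) :
    ∀ a, 1 ≤ a → ∀ h : a ≤ n, (cmpA X h : X.V a →ₗ[ℂ] X.V n) = 0 := by
  classical
  intro a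
  induction a using Nat.strong_induction_on with
  | _ a IH =>
  intro ha1 h
  obtain ⟨b, rfl⟩ : ∃ b, a = b + 1 := ⟨a - 1, (Nat.succ_pred_eq_of_pos ha1).symm⟩
  have hbn : b ≤ n := Nat.le_of_succ_le h
  have hprev : (cmpA X hbn : X.V b →ₗ[ℂ] X.V n) = 0 := by
    rcases Nat.eq_zero_or_pos b with rfl | hb
    · haveI : Subsingleton (X.V 0) := hsupp 0 (Or.inl rfl)
      exact lmap_zero_dom _
    · exact IH b (Nat.lt_succ_self b) hb hbn
  by_contra hne
  have : ¬ ∀ y, cmpA X h y = 0 := fun hall => hne (by ext y; simpa using hall y)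
  push_neg at this
  obtain ⟨x, hx⟩ := this
  -- a dual functional taking value 1 on `cvec X b x n`
  have hcvn : cvec X b x n = cmpA X h x := cvec_pos X b x h
  have hcn_ne : cvec X b x n ≠ 0 := by rw [hcvn]; exact hx
  have : ¬ ∀ g : Module.Dual ℂ (X.V n), g (cvec X b x n) = 0 := fun hall =>
    hcn_ne ((Module.forall_dual_apply_eq_zero_iff ℂ (cvec X b x n)).mp hall)
  push_neg at this
  obtain ⟨g0, hg0⟩ := this
  set lam : Module.Dual ℂ (X.V n) := (g0 (cvec X b x n))⁻¹ • g0 with hlamdef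
  have hlam : lam (cvec X b x n) = 1 := by
    rw [hlamdef]
    simp only [LinearMap.smul_apply, smul_eq_mul]
    exact inv_mul_cancel₀ hg0
  have hcne : ∀ i, b + 1 ≤ i → i ≤ n → cvec X b x i ≠ 0 := by
    intro i hi hin hc0
    apply hcn_ne
    rw [← cvec_cmpA X n b x hi hin, hc0, map_zero]
  have hKgt : ∀ i, n < i → Subsingleton ↥(Ksub X b x i) := fun i hi => by
    haveI := hsupp i (Or.inr hi); exact sub_subsingleton _
  -- the retraction is a morphism
  have hretr : ∀ i (k : ↥(Ksub X b x i)), rmap X n b x lam i (k : X.V i) = k := by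
    intro i k
    by_cases hcond : b + 1 ≤ i ∧ i ≤ n
    · obtain ⟨t, ht⟩ := Submodule.mem_span_singleton.mp k.2
      apply Subtype.ext
      rw [rmap_pos X n b x lam hcond.1 hcond.2, ← ht]
      simp [map_smul, cvec_cmpA X n b x hcond.1 hcond.2, hlam]
    · haveI : Subsingleton ↥(Ksub X b x i) := by
        rcases not_and_or.mp hcond with hi | hi
        · exact Ksub_subsingleton_lt X b x hi
        · exact hKgt i (Nat.lt_of_not_le hi)
      exact Subsingleton.elim _ _
  have hmor : ∀ i, (Krep X b x).f i ∘ₗ rmap X n b x lam i =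
      rmap X n b x lam (i + 1) ∘ₗ X.f i := by
    intro i
    by_cases hc1 : b + 1 ≤ i ∧ i ≤ n
    · by_cases hc2 : i + 1 ≤ n
      · ext y
        simp only [LinearMap.comp_apply]
        rw [rmap_pos X n b x lam hc1.1 hc1.2 y,
          rmap_pos X n b x lam (Nat.le_succ_of_le hc1.1) hc2 (X.f i y), map_smul]
        have hnat : cmpA X hc2 (X.f i y) = cmpA X hc1.2 y := by
          have := congrArg (fun g => g y) (cmpA_succ_left X hc2 hc1.2)
          simpa using this.symm
        rw [hnat]
        have hfc : ((X.f i).restrict (Ksub_map X b x i)) ⟨cvec X b x i, cvec_mem X b x i⟩ =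
            (⟨cvec X b x (i + 1), cvec_mem X b x (i + 1)⟩ : ↥(Ksub X b x (i + 1))) := by
          apply Subtype.ext
          exact (LinearMap.restrict_coe_apply (X.f i) (Ksub_map X b x i)
            ⟨cvec X b x i, cvec_mem X b x i⟩).trans (cvec_succ X b x hc1.1)
        rw [hfc]
      · haveI : Subsingleton ((Krep X b x).V (i + 1)) := hKgt (i + 1) (by omega)
        exact lmap_ext_cod _ _
    · by_cases hc2 : b + 1 ≤ i + 1 ∧ i + 1 ≤ n
      · obtain rfl : b = i := by omega
        ext y
        simp only [LinearMap.comp_apply, rmap_neg X n b x lam hc1, LinearMap.zero_apply,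
          map_zero, ZeroMemClass.coe_zero]
        rw [rmap_pos X n b x lam hc2.1 hc2.2 (X.f b y)]
        have hnat : cmpA X hc2.2 (X.f b y) = cmpA X hbn y := by
          have := congrArg (fun g => g y) (cmpA_succ_left X hc2.2 hbn)
          simpa using this.symm
        rw [hnat, hprev]
        simp
      · rw [rmap_neg X n b x lam hc1, rmap_neg X n b x lam hc2]
        simp
  -- the complement representation
  have hker : ∀ i, ∀ y ∈ LinearMap.ker (rmap X n b x lam i),
      X.f i y ∈ LinearMap.ker (rmap X n b x lam (i + 1)) := by
    intro i y hy
    rw [LinearMap.mem_ker] at hy ⊢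
    have hthis := congrArg (fun g => g y) (hmor i)
    simp only [LinearMap.comp_apply] at hthis
    rw [← hthis, hy, map_zero]
  let Xp : ARep :=
    { V := fun i => ↥(LinearMap.ker (rmap X n b x lam i))
      f := fun i => (X.f i).restrict (hker i) }
  -- the isomorphism X ≅ K ⊕ Xp
  have hρmem : ∀ i (y : X.V i),
      y - ((rmap X n b x lam i y : X.V i)) ∈ LinearMap.ker (rmap X n b x lam i) := by
    intro i y
    rw [LinearMap.mem_ker, map_sub, hretr i (rmap X n b x lam i y), sub_self]
  let ρ : ∀ i, X.V i →ₗ[ℂ] ↥(LinearMap.ker (rmap X n b x lam i)) := fun i =>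
    LinearMap.codRestrict _ (LinearMap.id - (Ksub X b x i).subtype ∘ₗ rmap X n b x lam i)
      (fun y => hρmem i y)
  have hρcoe : ∀ i (y : X.V i), ((ρ i y : X.V i)) = y - ((rmap X n b x lam i y : X.V i)) :=
    fun i y => rfl
  let φ : ∀ i, X.V i →ₗ[ℂ] (dsum (Krep X b x) Xp).V i := fun i =>
    (rmap X n b x lam i).prod (ρ i)
  have hφmem : φ ∈ homSet X (dsum (Krep X b x) Xp) := by
    intro i
    ext y
    have h1 := congrArg (fun g => g y) (hmor i)
    simp only [LinearMap.comp_apply] at h1 ⊢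
    show ((dsum (Krep X b x) Xp).f i) (φ i y) = φ (i + 1) (X.f i y)
    have : ((dsum (Krep X b x) Xp).f i) (φ i y) =
        (((Krep X b x).f i) (rmap X n b x lam i y), (Xp.f i) (ρ i y)) := rfl
    rw [this]
    have : φ (i + 1) (X.f i y) = (rmap X n b x lam (i + 1) (X.f i y), ρ (i + 1) (X.f i y)) := rfl
    rw [this]
    refine Prod.ext (by simpa using h1) (Subtype.ext ?_)
    show X.f i ((ρ i y : X.V i)) = ((ρ (i + 1) (X.f i y) : X.V (i + 1)))
    rw [hρcoe, hρcoe, map_sub]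
    congr 1
    have hKcoe : Subtype.val (((Krep X b x).f i) (rmap X n b x lam i y)) =
        X.f i ((rmap X n b x lam i y : X.V i)) :=
      LinearMap.restrict_coe_apply (X.f i) (Ksub_map X b x i) (rmap X n b x lam i y)
    rw [← h1]
    exact hKcoe.symm
  have hφbij : ∀ i, Function.Bijective (φ i) := by
    intro i
    constructor
    · intro u v huv
      have h1 : rmap X n b x lam i u = rmap X n b x lam i v := congrArg Prod.fst huv
      have h2 : ρ i u = ρ i v := congrArg Prod.snd huv
      have hval : ((rmap X n b x lam i) u : X.V i) = ((rmap X n b x lam i) v : X.V i) :=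
        congrArg Subtype.val h1
      have h2' : u - ((rmap X n b x lam i) u : X.V i) =
          v - ((rmap X n b x lam i) v : X.V i) := by
        have := congrArg Subtype.val h2
        simpa only [hρcoe] using this
      rw [hval] at h2'
      exact sub_left_inj.mp h2'
    · rintro ⟨k, z⟩
      refine ⟨(k : X.V i) + (z : X.V i), ?_⟩
      have hrk : rmap X n b x lam i ((k : X.V i) + (z : X.V i)) = k := by
        rw [map_add, hretr i k, LinearMap.mem_ker.mp z.2, add_zero]
      refine Prod.ext hrk ?_
      apply Subtype.ext
      show Subtype.val ((ρ i) ((k : X.V i) + (z : X.V i))) = ((z : X.V i))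
      rw [hρcoe, hrk]
      abel
  have hKproj : IsProjRep n (Krep X b x) := by
    constructor
    · intro i hi
      rcases hi with rfl | hi
      · exact Ksub_subsingleton_lt X b x (by omega)
      · exact hKgt i hi
    · intro i h1 hlt
      by_cases hib : b + 1 ≤ i
      · intro u v huv
        apply Subtype.ext
        obtain ⟨t, ht⟩ := Submodule.mem_span_singleton.mp u.2
        obtain ⟨s, hs⟩ := Submodule.mem_span_singleton.mp v.2
        have hcoe : X.f i ((u : X.V i)) = X.f i ((v : X.V i)) := by
          have hv := congrArg Subtype.val huv
          exact (LinearMap.restrict_coe_apply (X.f i) (Ksub_map X b x i) u).symm.trans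
            (hv.trans (LinearMap.restrict_coe_apply (X.f i) (Ksub_map X b x i) v))
        rw [← ht, ← hs] at hcoe ⊢
        simp only [map_smul, cvec_succ X b x hib] at hcoe
        have hts : t = s := by
          have hc1 : cvec X b x (i + 1) ≠ 0 :=
            hcne (i + 1) (Nat.le_succ_of_le hib) (Nat.succ_le_of_lt hlt)
          have := sub_eq_zero.mpr hcoe
          rw [← sub_smul] at this
          rcases smul_eq_zero.mp this with h0 | h0
          · exact sub_eq_zero.mp h0
          · exact absurd h0 hc1
        rw [hts]
      · haveI := Ksub_subsingleton_lt X b x hib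
        exact lmap_inj_dom _
  haveI := hnps (Krep X b x) Xp hKproj ⟨φ, hφmem, hφbij⟩ n
  apply hcn_ne
  have : (⟨cvec X b x n, cvec_mem X b x n⟩ : ↥(Ksub X b x n)) =
      ⟨0, Submodule.zero_mem _⟩ := Subsingleton.elim _ _
  exact congrArg Subtype.val this
section Frk

variable {A B C : Type} [AddCommGroup A] [Module ℂ A] [AddCommGroup B] [Module ℂ B]
  [AddCommGroup C] [Module ℂ C]

/-- The rank of a linear map. -/
noncomputable def frk (f : A →ₗ[ℂ] B) : ℕ := Module.finrank ℂ (LinearMap.range f)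

lemma frk_comp_inj (g : B →ₗ[ℂ] C) (f : A →ₗ[ℂ] B) (hg : Function.Injective g) :
    frk (g ∘ₗ f) = frk f := by
  rw [frk, frk, LinearMap.range_comp]
  exact (LinearEquiv.finrank_eq
    (Submodule.equivMapOfInjective g hg (LinearMap.range f))).symm

lemma frk_comp_surj (g : B →ₗ[ℂ] C) (f : A →ₗ[ℂ] B) (hf : Function.Surjective f) :
    frk (g ∘ₗ f) = frk g := by
  rw [frk, frk, LinearMap.range_comp, LinearMap.range_eq_top.mpr hf, Submodule.map_top]

lemma frk_comp_le [FiniteDimensional ℂ C] (g : B →ₗ[ℂ] C) (f : A →ₗ[ℂ] B) :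
    frk (g ∘ₗ f) ≤ frk g := by
  rw [frk, frk, LinearMap.range_comp]
  exact Submodule.finrank_mono LinearMap.map_le_range

lemma frk_inj (f : A →ₗ[ℂ] B) (hf : Function.Injective f) : frk f = Module.finrank ℂ A :=
  LinearMap.finrank_range_of_inj hf

end Frk

lemma frk_cmpA_eq {n : ℕ} (A Ap Ab : ARep)
    (hApfd : ∀ i, FiniteDimensional ℂ (Ap.V i))
    (hAp : IsProjRep n Ap)
    (hAb0 : ∀ a, 1 ≤ a → ∀ h : a ≤ n, (cmpA Ab h : Ab.V a →ₗ[ℂ] Ab.V n) = 0)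
    (hiso : RepIso A (dsum Ap Ab)) {i : ℕ} (h1 : 1 ≤ i) (hin : i ≤ n) :
    frk (cmpA A hin) = Module.finrank ℂ (Ap.V i) := by
  obtain ⟨γ, hγ, hγbij⟩ := hiso
  have hnat : γ n ∘ₗ cmpA A hin = cmpA (dsum Ap Ab) hin ∘ₗ γ i := cmpA_natural hγ hin
  rw [cmpA_dsum Ap Ab hin] at hnat
  have e1 : frk (cmpA A hin) = frk (γ n ∘ₗ cmpA A hin) :=
    (frk_comp_inj (γ n) (cmpA A hin) (hγbij n).1).symm
  rw [hnat] at e1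
  replace e1 := e1.trans (frk_comp_surj _ (γ i) (hγbij i).2)
  rw [hAb0 i h1 hin] at e1
  have hsplit : (cmpA Ap hin).prodMap (0 : Ab.V i →ₗ[ℂ] Ab.V n) =
      LinearMap.inl ℂ (Ap.V n) (Ab.V n) ∘ₗ cmpA Ap hin ∘ₗ LinearMap.fst ℂ (Ap.V i) (Ab.V i) := by
    refine LinearMap.ext fun y => ?_
    show ((cmpA Ap hin) y.1, (0 : Ab.V i →ₗ[ℂ] Ab.V n) y.2) = _
    simp [LinearMap.inl_apply]
  rw [hsplit] at e1
  replace e1 := e1.trans (frk_comp_inj _ _ (LinearMap.inl_injective))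
  replace e1 := e1.trans (frk_comp_surj _ _ (LinearMap.fst_surjective))
  rw [frk_inj _ (cmpA_inj hAp h1 hin le_rfl)] at e1
  exact e1

/-- Embedding criterion for representations of the equioriented `A_n` quiver:
writing `M = P ⊕ X` with `P` projective and `X` without projective summands, and
`N = N_P ⊕ N̄` likewise, `N` embeds into `M` iff `N̄` embeds into `X` and
`dim N − dim N̄ ≤ dim P` componentwise. -/
theorem stmt16 (n : ℕ) (M P X N NP Nb : ARep)
    (hMfd : ∀ i, FiniteDimensional ℂ (M.V i)) (hNfd : ∀ i, FiniteDimensional ℂ (N.V i))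
    (hPfd : ∀ i, FiniteDimensional ℂ (P.V i)) (hXfd : ∀ i, FiniteDimensional ℂ (X.V i))
    (hNPfd : ∀ i, FiniteDimensional ℂ (NP.V i)) (hNbfd : ∀ i, FiniteDimensional ℂ (Nb.V i))
    (hMs : SupportedOn n M) (hNs : SupportedOn n N)
    (hP : IsProjRep n P) (hNP : IsProjRep n NP)
    (hX : SupportedOn n X ∧ NoProjSummand n X)
    (hNb : SupportedOn n Nb ∧ NoProjSummand n Nb)
    (hMdec : RepIso M (dsum P X)) (hNdec : RepIso N (dsum NP Nb)) :
    RepEmb N M ↔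
      RepEmb Nb X ∧ ∀ i,
        (Module.finrank ℂ (N.V i) : ℤ) - (Module.finrank ℂ (Nb.V i) : ℤ) ≤
          (Module.finrank ℂ (P.V i) : ℤ) := by
  classical
  obtain ⟨α, hα, hαbij⟩ := hNdec
  obtain ⟨β, hβ, hβbij⟩ := hMdec
  have hNdim : ∀ i, Module.finrank ℂ (N.V i) =
      Module.finrank ℂ (NP.V i) + Module.finrank ℂ (Nb.V i) := by
    intro i
    haveI := hNPfd i; haveI := hNbfd i; haveI := hNfd i
    rw [(LinearEquiv.ofBijective (α i) (hαbij i)).finrank_eq]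
    exact Module.finrank_prod
  have hcNb : ∀ a, 1 ≤ a → ∀ h : a ≤ n, (cmpA Nb h : Nb.V a →ₗ[ℂ] Nb.V n) = 0 :=
    noProj_cmpA_zero Nb hNb.1 hNb.2
  have hcX : ∀ a, 1 ≤ a → ∀ h : a ≤ n, (cmpA X h : X.V a →ₗ[ℂ] X.V n) = 0 :=
    noProj_cmpA_zero X hX.1 hX.2
  constructor
  · rintro ⟨φ, hφ, hφinj⟩
    obtain ⟨α', hα', hα'bij⟩ := RepIso.symm ⟨α, hα, hαbij⟩
    -- the composite morphism Nb → N → M → P ⊕ X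
    let ι : ∀ i, Nb.V i →ₗ[ℂ] (dsum NP Nb).V i := fun i => LinearMap.inr ℂ _ _
    have hι : ι ∈ homSet Nb (dsum NP Nb) := by
      intro i
      refine LinearMap.ext fun y => ?_
      show ((NP.f i) 0, (Nb.f i) y) = ((0 : NP.V (i + 1)), (Nb.f i) y)
      rw [map_zero]
    let θψ : ∀ i, Nb.V i →ₗ[ℂ] (dsum P X).V i := fun i => β i ∘ₗ φ i ∘ₗ α' i ∘ₗ ι i
    have hθψ : θψ ∈ homSet Nb (dsum P X) :=
      homSet_comp (homSet_comp (homSet_comp hι hα') hφ) hβ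
    let θ : ∀ i, Nb.V i →ₗ[ℂ] P.V i := fun i => LinearMap.fst ℂ _ _ ∘ₗ θψ i
    let ψ : ∀ i, Nb.V i →ₗ[ℂ] X.V i := fun i => LinearMap.snd ℂ _ _ ∘ₗ θψ i
    have hθmem : θ ∈ homSet Nb P := by
      intro i
      refine LinearMap.ext fun y => ?_
      have hthis := congrArg (fun g => g y) (hθψ i)
      simp only [LinearMap.comp_apply] at hthis
      show P.f i (θψ i y).1 = (θψ (i + 1) ((Nb.f i) y)).1
      rw [← hthis]
      rfl
    have hψmem : ψ ∈ homSet Nb X := by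
      intro i
      refine LinearMap.ext fun y => ?_
      have hthis := congrArg (fun g => g y) (hθψ i)
      simp only [LinearMap.comp_apply] at hthis
      show X.f i (θψ i y).2 = (θψ (i + 1) ((Nb.f i) y)).2
      rw [← hthis]
      rfl
    have hθ0 : ∀ i, θ i = 0 := by
      intro i
      by_cases hi : 1 ≤ i ∧ i ≤ n
      · refine LinearMap.ext fun y => ?_
        simp only [LinearMap.zero_apply]
        by_contra hy0
        have hinj := cmpA_inj hP hi.1 hi.2 le_rfl
        have h1 : cmpA P hi.2 (θ i y) ≠ 0 := by
          intro h0
          exact hy0 (hinj (h0.trans (map_zero (cmpA P hi.2)).symm))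
        have hnatθ := congrArg (fun g => g y) (cmpA_natural hθmem hi.2)
        simp only [LinearMap.comp_apply] at hnatθ
        rw [hcNb i hi.1 hi.2] at hnatθ
        simp only [LinearMap.zero_apply, map_zero] at hnatθ
        exact h1 hnatθ.symm
      · haveI : Subsingleton (P.V i) := hP.1 i (by omega)
        exact lmap_ext_cod _ _
    constructor
    · refine ⟨ψ, hψmem, fun i => ?_⟩
      intro u v huv
      have hinjθψ : Function.Injective (θψ i) := by
        intro a b hab
        have h3 : φ i (α' i (ι i a)) = φ i (α' i (ι i b)) := (hβbij i).1 hab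
        have h2 : α' i (ι i a) = α' i (ι i b) := hφinj i h3
        have h1 : ι i a = ι i b := (hα'bij i).1 h2
        exact congrArg Prod.snd h1
      apply hinjθψ
      refine Prod.ext ?_ huv
      show θ i u = θ i v
      rw [hθ0 i]
      rfl
    · intro i
      rw [hNdim i]
      by_cases hi : 1 ≤ i ∧ i ≤ n
      · haveI := hMfd n; haveI := hPfd i; haveI := hNPfd i
        suffices hle : Module.finrank ℂ (NP.V i) ≤ Module.finrank ℂ (P.V i) by
          push_cast
          omega
        have e1 : frk (cmpA N hi.2) = Module.finrank ℂ (NP.V i) :=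
          frk_cmpA_eq N NP Nb hNPfd hNP hcNb ⟨α, hα, hαbij⟩ hi.1 hi.2
        have e2 : frk (cmpA M hi.2) = Module.finrank ℂ (P.V i) :=
          frk_cmpA_eq M P X hPfd hP hcX ⟨β, hβ, hβbij⟩ hi.1 hi.2
        have hnat : φ n ∘ₗ cmpA N hi.2 = cmpA M hi.2 ∘ₗ φ i := cmpA_natural hφ hi.2
        have e3 : frk (cmpA N hi.2) ≤ frk (cmpA M hi.2) := by
          rw [← frk_comp_inj (φ n) (cmpA N hi.2) (hφinj n), hnat]
          exact frk_comp_le _ _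
        omega
      · haveI hs1 : Subsingleton (NP.V i) := hNP.1 i (by omega)
        haveI hs2 : Subsingleton (Nb.V i) := hNb.1 i (by omega)
        rw [Module.finrank_zero_of_subsingleton (M := NP.V i),
          Module.finrank_zero_of_subsingleton (M := Nb.V i)]
        push_cast
        omega
  · rintro ⟨hE, hdim⟩
    have hNPle : ∀ i, Module.finrank ℂ (NP.V i) ≤ Module.finrank ℂ (P.V i) := by
      intro i
      have hd := hdim i
      rw [hNdim i] at hd
      push_cast at hd
      omega
    obtain ⟨φP, hφP, hφPinj⟩ := projEmbed NP P hNPfd hPfd hNP hP hNPle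
    obtain ⟨ψX, hψX, hψXinj⟩ := hE
    obtain ⟨β', hβ', hβ'bij⟩ := RepIso.symm ⟨β, hβ, hβbij⟩
    let χ : ∀ i, (dsum NP Nb).V i →ₗ[ℂ] (dsum P X).V i := fun i => (φP i).prodMap (ψX i)
    have hχ : χ ∈ homSet (dsum NP Nb) (dsum P X) := by
      intro i
      refine LinearMap.ext fun y => ?_
      have h1 := congrArg (fun g => g y.1) (hφP i)
      have h2 := congrArg (fun g => g y.2) (hψX i)
      simp only [LinearMap.comp_apply] at h1 h2
      show ((P.f i) (φP i y.1), (X.f i) (ψX i y.2)) =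
        (φP (i + 1) ((NP.f i) y.1), ψX (i + 1) ((Nb.f i) y.2))
      rw [h1, h2]
    refine ⟨fun i => β' i ∘ₗ χ i ∘ₗ α i, homSet_comp (homSet_comp hα hχ) hβ', fun i => ?_⟩
    intro a b hab
    have hχinj : Function.Injective (χ i) := by
      intro c d hcd
      have h1 : φP i c.1 = φP i d.1 := congrArg Prod.fst hcd
      have h2 : ψX i c.2 = ψX i d.2 := congrArg Prod.snd hcd
      exact Prod.ext (hφPinj i h1) (hψXinj i h2)
    exact (hαbij i).1 (hχinj ((hβ'bij i).1 hab))
end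

section
/- A non-crossing arc diagram A on n points yields a representation N̄_A = ⊕_{(i,j)∈A} U_{i,j−1} of the equioriented A_n quiver satisfying dim End(N̄_A) = |A| = dim Ext^1(N̄_A, S); conversely, any multiplicity-free direct sum ⊕_{(i,j)∈I} U_{i,j−1} with no nonzero homomorphisms between distinct summands arises from a set I with no distinct (i,j),(k,l) satisfying i ≤ k < j ≤ l. -/
-- basics
lemma UV_eq_top {i j k : ℕ} (h : i ≤ k ∧ k ≤ j) : UV i j k = ⊤ := if_pos h
lemma UV_eq_bot {i j k : ℕ} (h : ¬(i ≤ k ∧ k ≤ j)) : UV i j k = ⊥ := if_neg h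

lemma one_mem_UV {i j k : ℕ} (h : i ≤ k ∧ k ≤ j) : (1:ℂ) ∈ UV i j k := by
  rw [UV_eq_top h]; trivial

lemma subsingleton_UV {i j k : ℕ} (h : ¬(i ≤ k ∧ k ≤ j)) : Subsingleton ↥(UV i j k) := by
  rw [UV_eq_bot h]; infer_instance

lemma finrank_UV (i j k : ℕ) :
    Module.finrank ℂ ↥(UV i j k) = if i ≤ k ∧ k ≤ j then 1 else 0 := by
  by_cases h : i ≤ k ∧ k ≤ j
  · rw [UV_eq_top h, if_pos h, finrank_top, Module.finrank_self ℂ]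
  · rw [UV_eq_bot h, if_neg h, finrank_bot]

lemma lmap_eq_of_dom {A B : Type*} [AddCommGroup A] [Module ℂ A] [AddCommGroup B] [Module ℂ B]
    [Subsingleton A] (f g : A →ₗ[ℂ] B) : f = g := by
  ext x
  rw [Subsingleton.elim x 0, map_zero, map_zero]

lemma lmap_eq_of_cod {A B : Type*} [AddCommGroup A] [Module ℂ A] [AddCommGroup B] [Module ℂ B]
    [Subsingleton B] (f g : A →ₗ[ℂ] B) : f = g := by
  ext x; exact Subsingleton.elim _ _

@[simp] lemma Urep_V (i j k : ℕ) : (Urep i j).V k = ↥(UV i j k) := rfl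

open Classical in
lemma Urep_f_pos {i j k : ℕ} (h : UV i j k ≤ UV i j (k + 1)) :
    (Urep i j).f k = Submodule.inclusion h := dif_pos h

open Classical in
lemma Urep_f_neg {i j k : ℕ} (h : ¬ UV i j k ≤ UV i j (k + 1)) :
    (Urep i j).f k = 0 := dif_neg h

lemma Urep_subsingleton {i j k : ℕ} (h : ¬(i ≤ k ∧ k ≤ j)) : Subsingleton ((Urep i j).V k) :=
  subsingleton_UV h

noncomputable instance (i j k : ℕ) : FiniteDimensional ℂ ((Urep i j).V k) := by
  show FiniteDimensional ℂ ↥(UV i j k); infer_instance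

noncomputable def uvOne {i j : ℕ} (k : ℕ) (h : i ≤ k ∧ k ≤ j) : (Urep i j).V k :=
  ⟨1, one_mem_UV h⟩

lemma Urep_f_one {i j k : ℕ} (h1 : i ≤ k ∧ k ≤ j) (h2 : i ≤ k + 1 ∧ k + 1 ≤ j) :
    (Urep i j).f k (uvOne k h1) = uvOne (k+1) h2 := by
  rw [Urep_f_pos (by rw [UV_eq_top h1, UV_eq_top h2])]
  rfl

section Pi
variable (V : ℕ → Type) [∀ i, AddCommGroup (V i)] [∀ i, Module ℂ (V i)] (N : ℕ)

noncomputable def piTrunc (h : ∀ i, N ≤ i → Subsingleton (V i)) :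
    (∀ i, V i) ≃ₗ[ℂ] ∀ i : Fin N, V i where
  toFun φ i := φ i
  invFun ψ i := if h' : i < N then ψ ⟨i, h'⟩ else 0
  left_inv φ := by
    funext i
    by_cases h' : i < N
    · simp [h']
    · simp only [dif_neg h']
      exact @Subsingleton.elim _ (h i (le_of_not_gt h')) _ _
  right_inv ψ := by
    funext i
    simp [i.2]
  map_add' a b := rfl
  map_smul' c a := rfl

lemma piFinite (h : ∀ i, N ≤ i → Subsingleton (V i)) [∀ i, FiniteDimensional ℂ (V i)] :
    Module.Finite ℂ (∀ i, V i) :=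
  Module.Finite.equiv (piTrunc V N h).symm

lemma piFinrank (h : ∀ i, N ≤ i → Subsingleton (V i)) [∀ i, FiniteDimensional ℂ (V i)] :
    Module.finrank ℂ (∀ i, V i) = ∑ i : Fin N, Module.finrank ℂ (V i) := by
  rw [LinearEquiv.finrank_eq (piTrunc V N h), Module.finrank_pi_fintype]

end Pi

section Hom

lemma mem_homSet {M N : ARep} {φ : ∀ i, M.V i →ₗ[ℂ] N.V i} :
    φ ∈ homSet M N ↔ ∀ i, N.f i ∘ₗ φ i = φ (i + 1) ∘ₗ M.f i := Iff.rfl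

lemma subsingleton_lmap_dom {A B : Type*} [AddCommGroup A] [Module ℂ A] [AddCommGroup B]
    [Module ℂ B] [Subsingleton A] : Subsingleton (A →ₗ[ℂ] B) := ⟨fun f g => lmap_eq_of_dom f g⟩

lemma subsingleton_lmap_cod {A B : Type*} [AddCommGroup A] [Module ℂ A] [AddCommGroup B]
    [Module ℂ B] [Subsingleton B] : Subsingleton (A →ₗ[ℂ] B) := ⟨fun f g => lmap_eq_of_cod f g⟩

lemma homAmbientFinite (M N : ARep) (b : ℕ) (hb : ∀ i, b ≤ i → Subsingleton (N.V i))
    [∀ i, FiniteDimensional ℂ (M.V i)] [∀ i, FiniteDimensional ℂ (N.V i)] :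
    Module.Finite ℂ (∀ i, M.V i →ₗ[ℂ] N.V i) :=
  piFinite _ b (fun i hi => haveI := hb i hi; subsingleton_lmap_cod)

lemma homSetFinite (M N : ARep) (b : ℕ) (hb : ∀ i, b ≤ i → Subsingleton (N.V i))
    [∀ i, FiniteDimensional ℂ (M.V i)] [∀ i, FiniteDimensional ℂ (N.V i)] :
    FiniteDimensional ℂ (homSet M N) := by
  haveI := homAmbientFinite M N b hb
  infer_instance

lemma homDim_eq_zero_of_dom (M N : ARep) (h : ∀ i, Subsingleton (M.V i)) :
    homDim M N = 0 := by
  haveI : Subsingleton (∀ i, M.V i →ₗ[ℂ] N.V i) :=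
    ⟨fun f g => funext fun i => haveI := h i; lmap_eq_of_dom _ _⟩
  haveI : Subsingleton (homSet M N) := ⟨fun a b => Subtype.ext (Subsingleton.elim _ _)⟩
  exact Module.finrank_zero_of_subsingleton

lemma homDim_eq_zero_of_cod (M N : ARep) (h : ∀ i, Subsingleton (N.V i)) :
    homDim M N = 0 := by
  haveI : Subsingleton (∀ i, M.V i →ₗ[ℂ] N.V i) :=
    ⟨fun f g => funext fun i => haveI := h i; lmap_eq_of_cod _ _⟩
  haveI : Subsingleton (homSet M N) := ⟨fun a b => Subtype.ext (Subsingleton.elim _ _)⟩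
  exact Module.finrank_zero_of_subsingleton

@[simp] lemma dsum_V (M N : ARep) (i : ℕ) : (dsum M N).V i = (M.V i × N.V i) := rfl
@[simp] lemma dsum_f (M N : ARep) (i : ℕ) : (dsum M N).f i = (M.f i).prodMap (N.f i) := rfl
@[simp] lemma dsumFam_V {k : ℕ} (F : Fin k → ARep) (i : ℕ) :
    (dsumFam F).V i = ∀ j, (F j).V i := rfl

noncomputable def homSetDsumRight (M N N' : ARep) :
    homSet M (dsum N N') ≃ₗ[ℂ] homSet M N × homSet M N' where
  toFun φ :=
    (⟨fun i => LinearMap.fst ℂ _ _ ∘ₗ φ.1 i, fun i => by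
        ext x
        have := DFunLike.congr_fun (φ.2 i) x
        exact congrArg Prod.fst this⟩,
     ⟨fun i => LinearMap.snd ℂ _ _ ∘ₗ φ.1 i, fun i => by
        ext x
        have := DFunLike.congr_fun (φ.2 i) x
        exact congrArg Prod.snd this⟩)
  invFun ψ := ⟨fun i => (ψ.1.1 i).prod (ψ.2.1 i), fun i => by
      ext x
      have h1 := DFunLike.congr_fun (ψ.1.2 i) x
      have h2 := DFunLike.congr_fun (ψ.2.2 i) x
      simp only [LinearMap.comp_apply] at h1 h2 ⊢
      simp [LinearMap.prod_apply, h1, h2, Prod.ext_iff]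
      exact ⟨h1, h2⟩⟩
  left_inv φ := by
    apply Subtype.ext; funext i; ext x <;> rfl
  right_inv ψ := by
    apply Prod.ext <;> (apply Subtype.ext; funext i; ext x <;> rfl)
  map_add' a b := by
    apply Prod.ext <;> (apply Subtype.ext; funext i; ext x <;> rfl)
  map_smul' c a := by
    apply Prod.ext <;> (apply Subtype.ext; funext i; ext x <;> rfl)

noncomputable def homSetDsumLeft (M M' N : ARep) :
    homSet (dsum M M') N ≃ₗ[ℂ] homSet M N × homSet M' N where
  toFun φ :=
    (⟨fun i => φ.1 i ∘ₗ LinearMap.inl ℂ _ _, fun i => by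
        ext x
        have h := DFunLike.congr_fun (φ.2 i) ((x, 0) : M.V i × M'.V i)
        exact h.trans (congrArg (φ.1 (i+1))
          (show ((M.f i) x, (M'.f i) 0) = ((M.f i) x, 0) by rw [map_zero]))⟩,
     ⟨fun i => φ.1 i ∘ₗ LinearMap.inr ℂ _ _, fun i => by
        ext x
        have h := DFunLike.congr_fun (φ.2 i) ((0, x) : M.V i × M'.V i)
        exact h.trans (congrArg (φ.1 (i+1))
          (show ((M.f i) 0, (M'.f i) x) = (0, (M'.f i) x) by rw [map_zero]))⟩)
  invFun ψ := ⟨fun i => (ψ.1.1 i).coprod (ψ.2.1 i), fun i => by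
      ext x
      have h1 := DFunLike.congr_fun (ψ.1.2 i) x.1
      have h2 := DFunLike.congr_fun (ψ.2.2 i) x.2
      simp only [LinearMap.comp_apply] at h1 h2 ⊢
      exact (map_add (N.f i) (ψ.1.1 i x.1) (ψ.2.1 i x.2)).trans (congrArg₂ (· + ·) h1 h2)⟩
  left_inv φ := by
    apply Subtype.ext; funext i; ext x
    show φ.1 i (x.1, 0) + φ.1 i (0, x.2) = φ.1 i x
    exact (map_add (φ.1 i) ((x.1, 0) : M.V i × M'.V i) ((0, x.2) : M.V i × M'.V i)).symm.trans
      (congrArg (φ.1 i) (Prod.ext (add_zero x.1) (zero_add x.2)))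
  right_inv ψ := by
    apply Prod.ext
    · apply Subtype.ext; funext i; ext x
      show ψ.1.1 i x + ψ.2.1 i 0 = ψ.1.1 i x
      rw [map_zero, add_zero]
    · apply Subtype.ext; funext i; ext x
      show ψ.1.1 i 0 + ψ.2.1 i x = ψ.2.1 i x
      rw [map_zero, zero_add]
  map_add' a b := by
    apply Prod.ext <;> (apply Subtype.ext; funext i; ext x <;> rfl)
  map_smul' c a := by
    apply Prod.ext <;> (apply Subtype.ext; funext i; ext x <;> rfl)

noncomputable def homSetDsumFam {k : ℕ} (M : ARep) (F : Fin k → ARep) :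
    homSet M (dsumFam F) ≃ₗ[ℂ] ∀ j, homSet M (F j) where
  toFun φ j :=
    ⟨fun i => LinearMap.proj j ∘ₗ φ.1 i, fun i => by
      ext x
      have h := DFunLike.congr_fun (φ.2 i) x
      exact congrFun h j⟩
  invFun ψ := ⟨fun i => LinearMap.pi fun j => (ψ j).1 i, fun i => by
      ext x
      funext j
      have := DFunLike.congr_fun ((ψ j).2 i) x
      exact this⟩
  left_inv φ := by apply Subtype.ext; funext i; ext x; rfl
  right_inv ψ := by funext j; apply Subtype.ext; funext i; ext x; rfl
  map_add' a b := by funext j; apply Subtype.ext; funext i; ext x; rfl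
  map_smul' c a := by funext j; apply Subtype.ext; funext i; ext x; rfl

end Hom

section Dim

noncomputable instance instFinDimDsumList : ∀ (L : List (ℕ × ℕ)) (i : ℕ),
    FiniteDimensional ℂ ((dsumList L).V i)
  | [], i => by simp only [dsumList]; exact (inferInstance : FiniteDimensional ℂ ↥(UV 1 0 i))
  | p :: L, i => by
    simp only [dsumList]
    haveI := instFinDimDsumList L i
    show FiniteDimensional ℂ ((Urep p.1 p.2).V i × (dsumList L).V i)
    infer_instance

noncomputable instance (n i : ℕ) : FiniteDimensional ℂ ((socSum n).V i) := by
  unfold socSum dsumFam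
  show FiniteDimensional ℂ (∀ j : Fin n, (Urep _ _).V i)
  infer_instance

lemma socSum_subsingleton (n : ℕ) {i : ℕ} (hi : n + 1 ≤ i) : Subsingleton ((socSum n).V i) := by
  show Subsingleton (∀ j : Fin n, (Urep ((j:ℕ)+1) ((j:ℕ)+1)).V i)
  haveI : ∀ j : Fin n, Subsingleton ((Urep ((j:ℕ)+1) ((j:ℕ)+1)).V i) := fun j =>
    Urep_subsingleton (by omega)
  infer_instance

lemma dsumList_subsingleton (L : List (ℕ × ℕ)) {i : ℕ} (h : ∀ p ∈ L, p.2 < i) :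
    Subsingleton ((dsumList L).V i) := by
  induction L with
  | nil => exact Urep_subsingleton (by omega)
  | cons p L ih =>
    haveI h1 : Subsingleton ((Urep p.1 p.2).V i) :=
      Urep_subsingleton (by have := h p (by simp); omega)
    haveI h2 := ih (fun q hq => h q (by simp [hq]))
    show Subsingleton ((Urep p.1 p.2).V i × (dsumList L).V i)
    infer_instance

lemma homDim_dsum_right (M N N' : ARep) (h1 : FiniteDimensional ℂ (homSet M N))
    (h2 : FiniteDimensional ℂ (homSet M N')) :
    homDim M (dsum N N') = homDim M N + homDim M N' := by
  unfold homDim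
  rw [LinearEquiv.finrank_eq (homSetDsumRight M N N'), Module.finrank_prod]

lemma homDim_dsum_left (M M' N : ARep) (h1 : FiniteDimensional ℂ (homSet M N))
    (h2 : FiniteDimensional ℂ (homSet M' N)) :
    homDim (dsum M M') N = homDim M N + homDim M' N := by
  unfold homDim
  rw [LinearEquiv.finrank_eq (homSetDsumLeft M M' N), Module.finrank_prod]

lemma homDim_dsumFam {k : ℕ} (M : ARep) (F : Fin k → ARep)
    (h : ∀ j, FiniteDimensional ℂ (homSet M (F j))) :
    homDim M (dsumFam F) = ∑ j, homDim M (F j) := by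
  unfold homDim
  rw [LinearEquiv.finrank_eq (homSetDsumFam M F), Module.finrank_pi_fintype]

end Dim

section Core

lemma val_bot {i j k : ℕ} (h : ¬(i ≤ k ∧ k ≤ j)) (x : (Urep i j).V k) : (x.1 : ℂ) = 0 :=
  (Submodule.mem_bot ℂ).1 (UV_eq_bot h ▸ x.2)

lemma map_zero_of_one {A B : Submodule ℂ ℂ} (hA : (1:ℂ) ∈ A) (g : ↥A →ₗ[ℂ] ↥B)
    (hg : (g ⟨1, hA⟩).1 = 0) : g = 0 := by
  ext x
  have hx : x = (x : ℂ) • (⟨1, hA⟩ : ↥A) := Subtype.ext (by simp)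
  show (g x).1 = (0 : ↥B).1
  rw [hx, map_smul, SetLike.val_smul, hg]
  simp

variable {a b c d : ℕ} {ψ : ∀ i, (Urep a b).V i →ₗ[ℂ] (Urep c d).V i}

lemma stepP (hψ : ψ ∈ homSet (Urep a b) (Urep c d)) (k k' : ℕ) (hk : k' = k + 1)
    (h1 : a ≤ k ∧ k ≤ b) (h2 : a ≤ k' ∧ k' ≤ b) (hN : c ≤ k ∧ k' ≤ d) :
    (ψ k' (uvOne k' h2)).1 = (ψ k (uvOne k h1)).1 := by
  subst hk
  have e := DFunLike.congr_fun (hψ k) (uvOne k h1)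
  simp only [LinearMap.comp_apply] at e
  rw [Urep_f_one h1 h2] at e
  have hle : UV c d k ≤ UV c d (k+1) := by
    rw [UV_eq_top ⟨hN.1, by omega⟩, UV_eq_top ⟨by omega, hN.2⟩]
  have e2 : (((Urep c d).f k) (ψ k (uvOne k h1))).1 = (ψ k (uvOne k h1)).1 := by
    rw [Urep_f_pos hle]; rfl
  exact (congrArg Subtype.val e).symm.trans e2

lemma stepR (hψ : ψ ∈ homSet (Urep a b) (Urep c d)) (k : ℕ)
    (h1 : a ≤ k ∧ k ≤ b) (hMtop : b < k + 1) (hN : c ≤ k ∧ k + 1 ≤ d) :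
    (ψ k (uvOne k h1)).1 = 0 := by
  have e := DFunLike.congr_fun (hψ k) (uvOne k h1)
  simp only [LinearMap.comp_apply] at e
  have hf0 : (Urep a b).f k = 0 := by
    apply Urep_f_neg
    rw [UV_eq_top h1, UV_eq_bot (by omega)]
    intro hle
    exact one_ne_zero ((Submodule.mem_bot ℂ).1 (hle trivial))
  rw [hf0] at e
  simp only [LinearMap.zero_apply, map_zero] at e
  have hle : UV c d k ≤ UV c d (k+1) := by
    rw [UV_eq_top ⟨hN.1, by omega⟩, UV_eq_top ⟨by omega, hN.2⟩]
  have e2 : (((Urep c d).f k) (ψ k (uvOne k h1))).1 = (ψ k (uvOne k h1)).1 := by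
    rw [Urep_f_pos hle]; rfl
  rw [e] at e2
  exact e2.symm

lemma stepL (hψ : ψ ∈ homSet (Urep a b) (Urep c d)) (k k' : ℕ) (hk : k' = k + 1)
    (h2 : a ≤ k' ∧ k' ≤ b) (hM1 : a ≤ k) (hNk : ¬(c ≤ k ∧ k ≤ d)) :
    (ψ k' (uvOne k' h2)).1 = 0 := by
  subst hk
  have h1 : a ≤ k ∧ k ≤ b := ⟨hM1, by omega⟩
  have e := DFunLike.congr_fun (hψ k) (uvOne k h1)
  simp only [LinearMap.comp_apply] at e
  rw [Urep_f_one h1 h2] at e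
  haveI := Urep_subsingleton (i := c) (j := d) hNk
  rw [Subsingleton.elim (ψ k (uvOne k h1)) 0, map_zero] at e
  exact congrArg Subtype.val e.symm

lemma psi_vanishes (hψ : ψ ∈ homSet (Urep a b) (Urep c d))
    (hC : ¬(c ≤ a ∧ a ≤ d ∧ d ≤ b)) :
    ∀ i (h1 : a ≤ i ∧ i ≤ b) (_ : c ≤ i ∧ i ≤ d), (ψ i (uvOne i h1)).1 = 0 := by
  by_cases hac : a < c
  · -- upward from c
    have up : ∀ t i, i = c + t → ∀ (h1 : a ≤ i ∧ i ≤ b), c ≤ i → i ≤ d →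
        (ψ i (uvOne i h1)).1 = 0 := by
      intro t
      induction t with
      | zero =>
        intro i hi h1 _ _
        have hic : i = c := by omega
        subst hic
        exact stepL hψ (i - 1) i (by omega) h1 (by omega) (by omega)
      | succ t ih =>
        intro i hi h1 hc hd
        rw [stepP hψ (c + t) i (by omega) ⟨by omega, by omega⟩ h1 ⟨by omega, by omega⟩]
        exact ih (c + t) rfl ⟨by omega, by omega⟩ (by omega) (by omega)
    intro i h1 h2
    exact up (i - c) i (by omega) h1 h2.1 h2.2
  · -- c ≤ a
    intro i h1 h2
    have hbd : b < d := by omega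
    have down : ∀ t i, i + t = b → ∀ (h1 : a ≤ i ∧ i ≤ b), c ≤ i → i ≤ d →
        (ψ i (uvOne i h1)).1 = 0 := by
      intro t
      induction t with
      | zero =>
        intro i hi h1 hc hd
        exact stepR hψ i h1 (by omega) ⟨hc, by omega⟩
      | succ t ih =>
        intro i hi h1 hc hd
        rw [← stepP hψ i (i + 1) rfl h1 ⟨by omega, by omega⟩ ⟨hc, by omega⟩]
        exact ih (i + 1) (by omega) ⟨by omega, by omega⟩ (by omega) (by omega)
    exact down (b - i) i (by omega) h1 h2.1 h2.2

lemma psi_i_eq_zero (hdom : ¬(a ≤ i ∧ i ≤ b) ∨ ¬(c ≤ i ∧ i ≤ d) ∨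
      ∀ (h1 : a ≤ i ∧ i ≤ b), (ψ i (uvOne i h1)).1 = 0) : ψ i = 0 := by
  rcases hdom with h | h | h
  · haveI := Urep_subsingleton (i := a) (j := b) h
    exact lmap_eq_of_dom _ _
  · haveI := Urep_subsingleton (i := c) (j := d) h
    exact lmap_eq_of_cod _ _
  · by_cases h1 : a ≤ i ∧ i ≤ b
    · exact map_zero_of_one (one_mem_UV h1) (ψ i) (h h1)
    · haveI := Urep_subsingleton (i := a) (j := b) h1
      exact lmap_eq_of_dom _ _

lemma homDim_Urep_zero (hC : ¬(c ≤ a ∧ a ≤ d ∧ d ≤ b)) :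
    homDim (Urep a b) (Urep c d) = 0 := by
  have hbot : homSet (Urep a b) (Urep c d) = ⊥ := by
    rw [eq_bot_iff]
    intro ψ hψ
    simp only [Submodule.mem_bot]
    funext i
    apply psi_i_eq_zero
    by_cases h1 : a ≤ i ∧ i ≤ b
    · by_cases h2 : c ≤ i ∧ i ≤ d
      · exact Or.inr (Or.inr (fun h1' => psi_vanishes hψ hC i h1' h2))
      · exact Or.inr (Or.inl h2)
    · exact Or.inl h1
  rw [homDim, hbot]
  exact finrank_bot ℂ _

open Classical in
noncomputable def canonHom (a b c d : ℕ) : ∀ i, (Urep a b).V i →ₗ[ℂ] (Urep c d).V i :=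
  fun i => if h : UV a b i ≤ UV c d i then Submodule.inclusion h else 0

open Classical in
lemma canonHom_pos {a b c d i : ℕ} (h : UV a b i ≤ UV c d i) :
    canonHom a b c d i = Submodule.inclusion h := dif_pos h

lemma canonHom_mem (hC : c ≤ a ∧ a ≤ d ∧ d ≤ b) :
    canonHom a b c d ∈ homSet (Urep a b) (Urep c d) := by
  intro i
  by_cases h1 : a ≤ i ∧ i ≤ b
  · by_cases h2 : c ≤ i + 1 ∧ i + 1 ≤ d
    · have hci : c ≤ i := le_trans hC.1 h1.1
      have hid : i ≤ d := by omega
      have hib : i + 1 ≤ b := by have := hC.2.2; omega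
      have lab : UV a b i ≤ UV c d i := by rw [UV_eq_top h1, UV_eq_top ⟨hci, hid⟩]
      have lab2 : UV a b (i+1) ≤ UV c d (i+1) := by
        rw [UV_eq_top ⟨by omega, hib⟩, UV_eq_top h2]
      ext x
      apply Subtype.ext
      simp only [LinearMap.comp_apply]
      rw [canonHom_pos lab, canonHom_pos lab2,
        Urep_f_pos (show UV c d i ≤ UV c d (i+1) by rw [UV_eq_top ⟨hci, hid⟩, UV_eq_top h2]),
        Urep_f_pos (show UV a b i ≤ UV a b (i+1) by rw [UV_eq_top h1, UV_eq_top ⟨by omega, hib⟩])]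
      rfl
    · haveI := Urep_subsingleton (i := c) (j := d) (k := i + 1) h2
      exact lmap_eq_of_cod _ _
  · haveI := Urep_subsingleton (i := a) (j := b) h1
    exact lmap_eq_of_dom _ _

lemma homDim_Urep_one (hC : c ≤ a ∧ a ≤ d ∧ d ≤ b) :
    homDim (Urep a b) (Urep c d) = 1 := by
  have hab : a ≤ b := le_trans hC.2.1 hC.2.2
  have ha : a ≤ a ∧ a ≤ b := ⟨le_rfl, hab⟩
  let E : ↥(homSet (Urep a b) (Urep c d)) →ₗ[ℂ] ℂ :=
    { toFun := fun ψ => (ψ.1 a (uvOne a ha)).1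
      map_add' := fun ψ χ => rfl
      map_smul' := fun z ψ => rfl }
  have hinj : Function.Injective E := by
    rw [injective_iff_map_eq_zero]
    intro ψ hz
    have up : ∀ t i, i = a + t → ∀ (h1 : a ≤ i ∧ i ≤ b), c ≤ i → i ≤ d →
        (ψ.1 i (uvOne i h1)).1 = 0 := by
      intro t
      induction t with
      | zero =>
        intro i hi h1 _ _
        have : i = a := by omega
        subst this
        exact hz
      | succ t ih =>
        intro i hi h1 hc hd
        rw [stepP ψ.2 (a + t) i (by omega) ⟨by omega, by omega⟩ h1 ⟨by omega, by omega⟩]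
        exact ih (a + t) rfl ⟨by omega, by omega⟩ (by omega) (by omega)
    apply Subtype.ext
    funext i
    apply psi_i_eq_zero (ψ := ψ.1)
    by_cases h1 : a ≤ i ∧ i ≤ b
    · by_cases h2 : c ≤ i ∧ i ≤ d
      · exact Or.inr (Or.inr (fun h1' => up (i - a) i (by omega) h1' h2.1 h2.2))
      · exact Or.inr (Or.inl h2)
    · exact Or.inl h1
  have hsurj : Function.Surjective E := by
    intro z
    refine ⟨z • ⟨canonHom a b c d, canonHom_mem hC⟩, ?_⟩
    show ((z • canonHom a b c d a) (uvOne a ha)).1 = z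
    have lab : UV a b a ≤ UV c d a := by
      rw [UV_eq_top ha, UV_eq_top ⟨hC.1, hC.2.1⟩]
    rw [LinearMap.smul_apply, canonHom_pos lab]
    show z * 1 = z
    exact mul_one z
  rw [homDim, LinearEquiv.finrank_eq (LinearEquiv.ofBijective E ⟨hinj, hsurj⟩),
    Module.finrank_self]

lemma homDim_Urep (a b c d : ℕ) :
    homDim (Urep a b) (Urep c d) = if c ≤ a ∧ a ≤ d ∧ d ≤ b then 1 else 0 := by
  split_ifs with h
  · exact homDim_Urep_one h
  · exact homDim_Urep_zero h

end Core

section Lists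

def bigB (L : List (ℕ × ℕ)) : ℕ := (L.map Prod.snd).sum + 1

lemma snd_lt_bigB (L : List (ℕ × ℕ)) : ∀ p ∈ L, p.2 < bigB L := by
  induction L with
  | nil => intro p hp; cases hp
  | cons q L ih =>
    intro p hp
    rcases List.mem_cons.1 hp with h | h
    · subst h; simp [bigB]
    · have := ih p h; simp [bigB] at this ⊢; omega

lemma urep_fin (M : ARep) (hM : ∀ i, FiniteDimensional ℂ (M.V i)) (c d : ℕ) :
    FiniteDimensional ℂ (homSet M (Urep c d)) := by
  haveI := hM
  exact homSetFinite M (Urep c d) (d + 1) (fun i hi => Urep_subsingleton (by omega))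

lemma dsumList_hom_fin (M : ARep) (hM : ∀ i, FiniteDimensional ℂ (M.V i))
    (L : List (ℕ × ℕ)) : FiniteDimensional ℂ (homSet M (dsumList L)) := by
  haveI := hM
  exact homSetFinite M (dsumList L) (bigB L)
    (fun i hi => dsumList_subsingleton L (fun p hp => lt_of_lt_of_le (snd_lt_bigB L p hp) hi))

lemma homDim_dsumList_right (M : ARep) (hM : ∀ i, FiniteDimensional ℂ (M.V i))
    (L : List (ℕ × ℕ)) :
    homDim M (dsumList L) = (L.map fun q => homDim M (Urep q.1 q.2)).sum := by
  induction L with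
  | nil =>
    simp only [List.map_nil, List.sum_nil]
    exact homDim_eq_zero_of_cod _ _ (fun i => Urep_subsingleton (by omega))
  | cons q L ih =>
    show homDim M (dsum (Urep q.1 q.2) (dsumList L)) = _
    rw [homDim_dsum_right M _ _ (urep_fin M hM q.1 q.2) (dsumList_hom_fin M hM L), ih]
    simp

lemma homDim_dsumList_left (L : List (ℕ × ℕ)) (N : ARep)
    (hN : ∀ i, FiniteDimensional ℂ (N.V i)) (b : ℕ)
    (hb : ∀ i, b ≤ i → Subsingleton (N.V i)) :
    homDim (dsumList L) N = (L.map fun p => homDim (Urep p.1 p.2) N).sum := by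
  induction L with
  | nil =>
    simp only [List.map_nil, List.sum_nil]
    exact homDim_eq_zero_of_dom _ _ (fun i => Urep_subsingleton (by omega))
  | cons p L ih =>
    haveI := hN
    show homDim (dsum (Urep p.1 p.2) (dsumList L)) N = _
    rw [homDim_dsum_left _ _ N (homSetFinite _ N b hb) (homSetFinite _ N b hb), ih]
    simp

lemma list_sum_single {α : Type*} (L : List α) (hnd : L.Nodup) (p : α) (hp : p ∈ L)
    (g : α → ℕ) (h1 : g p = 1) (h0 : ∀ q ∈ L, q ≠ p → g q = 0) : (L.map g).sum = 1 := by
  induction L with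
  | nil => cases hp
  | cons q L ih =>
    rw [List.nodup_cons] at hnd
    simp only [List.map_cons, List.sum_cons]
    rcases List.mem_cons.1 hp with h | h
    · subst h
      have : (L.map g).sum = 0 := by
        apply List.sum_eq_zero
        intro x hx
        rcases List.mem_map.1 hx with ⟨q', hq', rfl⟩
        exact h0 q' (List.mem_cons_of_mem _ hq') (fun hqp => hnd.1 (hqp ▸ hq'))
      omega
    · rw [h0 q (List.mem_cons_self) (fun hqp => hnd.1 (hqp ▸ h)),
        ih hnd.2 h (fun q' hq' => h0 q' (List.mem_cons_of_mem _ hq'))]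

lemma list_sum_const_one {α : Type*} (L : List α) : (L.map fun _ => 1).sum = L.length := by
  induction L with
  | nil => rfl
  | cons q L ih => simp [ih]; omega

-- socSum hom dims
lemma homDim_Urep_socSum (n a b : ℕ) (ha : 1 ≤ a) (hab : a ≤ b) (han : a ≤ n) :
    homDim (Urep a b) (socSum n) = 1 := by
  rw [socSum, homDim_dsumFam _ _ (fun j => urep_fin _ (fun i => inferInstance) _ _)]
  have key : ∀ j : Fin n, homDim (Urep a b) (Urep ((j : ℕ) + 1) ((j : ℕ) + 1)) =
      if j = (⟨a - 1, by omega⟩ : Fin n) then 1 else 0 := by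
    intro j
    rw [homDim_Urep]
    by_cases h : j = (⟨a - 1, by omega⟩ : Fin n)
    · subst h
      rw [if_pos (by simp only [Fin.val_mk]; omega), if_pos rfl]
    · rw [if_neg, if_neg h]
      intro hc
      exact h (Fin.ext (by simp only [Fin.val_mk]; omega))
  rw [Finset.sum_congr rfl (fun j _ => key j), Finset.sum_ite_eq' Finset.univ _ (fun _ => 1),
    if_pos (Finset.mem_univ _)]

-- vertex dimensions of socSum
lemma finrank_socSum_V (n i : ℕ) :
    Module.finrank ℂ ((socSum n).V i) = if 1 ≤ i ∧ i ≤ n then 1 else 0 := by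
  show Module.finrank ℂ (∀ j : Fin n, (Urep ((j:ℕ)+1) ((j:ℕ)+1)).V i) = _
  rw [Module.finrank_pi_fintype]
  by_cases hi : 1 ≤ i ∧ i ≤ n
  · rw [if_pos hi]
    have key : ∀ j : Fin n, Module.finrank ℂ ((Urep ((j:ℕ)+1) ((j:ℕ)+1)).V i) =
        if j = (⟨i - 1, by omega⟩ : Fin n) then 1 else 0 := by
      intro j
      show Module.finrank ℂ ↥(UV ((j:ℕ)+1) ((j:ℕ)+1) i) = _
      rw [finrank_UV]
      by_cases h : j = (⟨i - 1, by omega⟩ : Fin n)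
      · subst h; rw [if_pos (by simp only [Fin.val_mk]; omega), if_pos rfl]
      · rw [if_neg, if_neg h]
        intro hc
        exact h (Fin.ext (by simp only [Fin.val_mk]; omega))
    rw [Finset.sum_congr rfl (fun j _ => key j),
      Finset.sum_ite_eq' Finset.univ _ (fun _ => 1), if_pos (Finset.mem_univ _)]
  · rw [if_neg hi]
    apply Finset.sum_eq_zero
    intro j _
    show Module.finrank ℂ ↥(UV ((j:ℕ)+1) ((j:ℕ)+1) i) = 0
    rw [finrank_UV, if_neg]
    have := j.isLt
    omega

lemma ext1Dim_formula (M N : ARep) (b : ℕ)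
    (hM : ∀ i, FiniteDimensional ℂ (M.V i)) (hN : ∀ i, FiniteDimensional ℂ (N.V i))
    (hb : ∀ i, b ≤ i → Subsingleton (N.V i)) :
    ext1Dim M N + Module.finrank ℂ (∀ i, M.V i →ₗ[ℂ] N.V i)
      = Module.finrank ℂ (∀ i, M.V i →ₗ[ℂ] N.V (i + 1)) + homDim M N := by
  haveI := hM; haveI := hN
  haveI hS : Module.Finite ℂ (∀ i, M.V i →ₗ[ℂ] N.V i) := homAmbientFinite M N b hb
  haveI hT : Module.Finite ℂ (∀ i, M.V i →ₗ[ℂ] N.V (i + 1)) :=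
    piFinite _ b (fun i hi => haveI := hb (i + 1) (by omega); subsingleton_lmap_cod)
  have hker : LinearMap.ker (delta M N) = homSet M N := by
    ext φ
    simp only [LinearMap.mem_ker, mem_homSet]
    constructor
    · intro h i
      have := congrFun h i
      exact sub_eq_zero.mp this
    · intro h
      funext i
      exact sub_eq_zero_of_eq (h i)
  have h1 := LinearMap.finrank_range_add_finrank_ker (delta M N)
  have h2 := Submodule.finrank_quotient_add_finrank (LinearMap.range (delta M N))
  rw [hker] at h1
  unfold ext1Dim homDim
  omega

end Lists

lemma dsumList_subsingleton0 (L : List (ℕ × ℕ)) (h : ∀ p ∈ L, 1 ≤ p.1) :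
    Subsingleton ((dsumList L).V 0) := by
  induction L with
  | nil => exact Urep_subsingleton (by omega)
  | cons p L ih =>
    haveI h1 : Subsingleton ((Urep p.1 p.2).V 0) :=
      Urep_subsingleton (by have := h p (by simp); omega)
    haveI h2 := ih (fun q hq => h q (by simp [hq]))
    show Subsingleton ((Urep p.1 p.2).V 0 × (dsumList L).V 0)
    infer_instance

lemma list_sum_ones {α : Type*} (L : List α) (f : α → ℕ) (h : ∀ p ∈ L, f p = 1) :
    (L.map f).sum = L.length := by
  induction L with
  | nil => rfl
  | cons q Lt ih =>
    simp only [List.map_cons, List.sum_cons, List.length_cons,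
      h q (List.mem_cons_self), ih (fun p hp => h p (List.mem_cons_of_mem _ hp))]
    omega

/-- A non-crossing arc diagram `A` (encoded as a duplicate-free list `L` of arcs) yields
`N̄_A = ⊕_{(i,j)∈A} U_{i,j−1}` with `dim End(N̄_A) = |A| = dim Ext¹(N̄_A, S)`; conversely
any multiplicity-free sum with no nonzero homs between distinct summands comes from a
non-crossing set of pairs. -/
theorem stmt19 (n : ℕ) (L : List (ℕ × ℕ)) (hnd : L.Nodup)
    (hL : ∀ p ∈ L, 1 ≤ p.1 ∧ p.1 < p.2 ∧ p.2 ≤ n) :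
    ((∀ p ∈ L, ∀ q ∈ L, p ≠ q → ¬(p.1 ≤ q.1 ∧ q.1 < p.2 ∧ p.2 ≤ q.2)) →
      homDim (dsumList (L.map fun p => (p.1, p.2 - 1)))
          (dsumList (L.map fun p => (p.1, p.2 - 1))) = L.length ∧
      ext1Dim (dsumList (L.map fun p => (p.1, p.2 - 1))) (socSum n) = L.length) ∧
    ((∀ p ∈ L, ∀ q ∈ L, p ≠ q →
        homDim (Urep p.1 (p.2 - 1)) (Urep q.1 (q.2 - 1)) = 0) →
      ∀ p ∈ L, ∀ q ∈ L, p ≠ q → ¬(p.1 ≤ q.1 ∧ q.1 < p.2 ∧ p.2 ≤ q.2)) := by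
  set L' : List (ℕ × ℕ) := L.map fun p => (p.1, p.2 - 1) with hL'def
  have hL'bound : ∀ i, n ≤ i → Subsingleton ((dsumList L').V i) := by
    intro i hi
    apply dsumList_subsingleton
    intro q hq
    rcases List.mem_map.1 hq with ⟨p, hp, rfl⟩
    have := hL p hp
    simp only
    omega
  constructor
  · intro hNC
    have inner : ∀ p ∈ L, homDim (Urep p.1 (p.2 - 1)) (dsumList L') = 1 := by
      intro p hp
      rw [homDim_dsumList_right _ (fun i => inferInstance) L', hL'def, List.map_map]
      apply list_sum_single L hnd p hp
      · show homDim (Urep p.1 (p.2 - 1)) (Urep p.1 (p.2 - 1)) = 1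
        have := hL p hp
        rw [homDim_Urep, if_pos ⟨le_rfl, by omega, le_rfl⟩]
      · intro q hq hqp
        show homDim (Urep p.1 (p.2 - 1)) (Urep q.1 (q.2 - 1)) = 0
        rw [homDim_Urep, if_neg]
        intro hc
        have hLp := hL p hp
        have hLq := hL q hq
        exact hNC q hq p hp hqp ⟨hc.1, by omega, by omega⟩
    constructor
    · rw [homDim_dsumList_left L' (dsumList L') (fun i => inferInstance) n hL'bound,
        hL'def, List.map_map]
      exact list_sum_ones L _ (fun p hp => inner p hp)
    · -- Ext¹ computation
      have hsoc : ∀ i, n + 1 ≤ i → Subsingleton ((socSum n).V i) :=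
        fun i hi => socSum_subsingleton n hi
      have hform := ext1Dim_formula (dsumList L') (socSum n) (n + 1)
        (fun i => inferInstance) (fun i => inferInstance) hsoc
      have hm0 : Module.finrank ℂ ((dsumList L').V 0) = 0 := by
        haveI : Subsingleton ((dsumList L').V 0) := by
          apply dsumList_subsingleton0
          intro q hq
          rcases List.mem_map.1 hq with ⟨p, hp, rfl⟩
          exact (hL p hp).1
        exact Module.finrank_zero_of_subsingleton
      have hmn : Module.finrank ℂ ((dsumList L').V n) = 0 := by
        haveI := hL'bound n le_rfl
        exact Module.finrank_zero_of_subsingleton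
      have hdims : Module.finrank ℂ (∀ i, (dsumList L').V i →ₗ[ℂ] (socSum n).V (i + 1))
          = Module.finrank ℂ (∀ i, (dsumList L').V i →ₗ[ℂ] (socSum n).V i) := by
        rw [piFinrank _ (n + 1) (fun i hi =>
            haveI := hsoc (i + 1) (by omega); subsingleton_lmap_cod),
          piFinrank _ (n + 1) (fun i hi =>
            haveI := hsoc i (by omega); subsingleton_lmap_cod)]
        apply Finset.sum_congr rfl
        intro i _
        rw [Module.finrank_linearMap, Module.finrank_linearMap, finrank_socSum_V,
          finrank_socSum_V]
        by_cases h0 : (i : ℕ) = 0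
        · rw [h0, hm0]; simp
        · by_cases hn : (i : ℕ) = n
          · rw [hn, hmn]; simp
          · have := i.isLt
            rw [if_pos (by omega), if_pos (by omega)]
      have hext : ext1Dim (dsumList L') (socSum n) = homDim (dsumList L') (socSum n) := by
        have hle : homDim (dsumList L') (socSum n)
            ≤ Module.finrank ℂ (∀ i, (dsumList L').V i →ₗ[ℂ] (socSum n).V i) := by
          haveI := homAmbientFinite (dsumList L') (socSum n) (n + 1) hsoc
          exact Submodule.finrank_le _
        omega
      rw [hext, homDim_dsumList_left L' (socSum n) (fun i => inferInstance) (n + 1) hsoc,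
        hL'def, List.map_map]
      exact list_sum_ones L _ (fun p hp => by
        show homDim (Urep p.1 (p.2 - 1)) (socSum n) = 1
        have := hL p hp
        exact homDim_Urep_socSum n p.1 (p.2 - 1) (by omega) (by omega) (by omega))
  · intro hH p hp q hq hpq hc
    have h0 := hH q hq p hp (Ne.symm hpq)
    have hLp := hL p hp
    have hLq := hL q hq
    rw [homDim_Urep, if_pos ⟨hc.1, by omega, by omega⟩] at h0
    exact one_ne_zero h0
end
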